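/- arXiv:2402.04785 — 9 statements merged into one kernel-verified Lean document; each statement's English description precedes it below -/
import Mathlib

section
/- Let h_1 ≤ ... ≤ h_n be nonnegative reals with h_1 > 0 and let a ≥ 0. Define g(j) = h_j + a(Σ_{i=1}^j 1/h_i)^{-1} and p(j) = (j + a)(Σ_{i=1}^j 1/h_i)^{-1}. Then (1/2) min_{j∈[n]} g(j) ≤ min_{j∈[n]} p(j) ≤ min_{j∈[n]} g(j). -/
set_option maxHeartbeats 1000000


open Finset

theorem min_g_le_min_p_le_min_g (n : ℕ) (hn : 0 < n) (h : Fin n → ℝ)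
    (hpos : ∀ i, 0 < h i) (hsort : Monotone h) (a : ℝ) (ha : 0 ≤ a) :
    (1 / 2) * (⨅ j : Fin n, (h j + a * (∑ i ∈ Finset.Iic j, (h i)⁻¹)⁻¹)) ≤
      (⨅ j : Fin n, (((j.1 : ℝ) + 1 + a) * (∑ i ∈ Finset.Iic j, (h i)⁻¹)⁻¹)) ∧
    (⨅ j : Fin n, (((j.1 : ℝ) + 1 + a) * (∑ i ∈ Finset.Iic j, (h i)⁻¹)⁻¹)) ≤
      (⨅ j : Fin n, (h j + a * (∑ i ∈ Finset.Iic j, (h i)⁻¹)⁻¹)) := by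
  have : Nonempty (Fin n) := ⟨⟨0, hn⟩⟩
  set S : Fin n → ℝ := fun j => ∑ i ∈ Finset.Iic j, (h i)⁻¹ with hSdef
  have hS : ∀ j, 0 < S j := fun j =>
    Finset.sum_pos (fun i _ => inv_pos.2 (hpos i)) ⟨j, mem_Iic.2 le_rfl⟩
  set g : Fin n → ℝ := fun j => h j + a * (S j)⁻¹ with hgdef
  set p : Fin n → ℝ := fun j => ((j.1 : ℝ) + 1 + a) * (S j)⁻¹ with hpdef
  have bddG : BddBelow (Set.range g) := (Set.finite_range g).bddBelow
  have bddP : BddBelow (Set.range p) := (Set.finite_range p).bddBelow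
  -- lower bound on S j
  have hSlb : ∀ j : Fin n, ((j.1 : ℝ) + 1) * (h j)⁻¹ ≤ S j := by
    intro j
    have : ∑ _i ∈ Finset.Iic j, (h j)⁻¹ ≤ S j := by
      apply Finset.sum_le_sum
      intro i hi
      exact inv_anti₀ (hpos i) (hsort (mem_Iic.1 hi))
    simpa [Fin.card_Iic, mul_comm] using this
  constructor
  · -- (1/2) * inf g ≤ inf p
    apply le_ciInf
    intro j
    set T : ℝ := ((j.1 : ℝ) + 1 + a) * (S j)⁻¹ with hTdef
    have hj1 : (0:ℝ) < (j.1 : ℝ) + 1 := by positivity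
    have hT : 0 < T := by
      apply mul_pos _ (inv_pos.2 (hS j))
      linarith
    set A : Finset (Fin n) := (Finset.Iic j).filter (fun i => h i ≤ T) with hAdef
    set z : Fin n := ⟨0, hn⟩ with hzdef
    have hzle : ∀ i : Fin n, z ≤ i := fun i => by simp [Fin.le_def, hzdef]
    have hzA : z ∈ A := by
      refine Finset.mem_filter.2 ⟨mem_Iic.2 (hzle j), ?_⟩
      -- h z ≤ T
      have h1 : S j ≤ ((j.1 : ℝ) + 1) * (h z)⁻¹ := by
        have : S j ≤ ∑ _i ∈ Finset.Iic j, (h z)⁻¹ := by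
          apply Finset.sum_le_sum
          intro i _
          exact inv_anti₀ (hpos z) (hsort (hzle i))
        simpa [Fin.card_Iic, mul_comm] using this
      have hz := hpos z
      calc h z = ((j.1:ℝ)+1) * (((j.1:ℝ)+1) * (h z)⁻¹)⁻¹ := by
              field_simp
        _ ≤ ((j.1:ℝ)+1) * (S j)⁻¹ := by
              apply mul_le_mul_of_nonneg_left (inv_anti₀ (hS j) h1) (le_of_lt hj1)
        _ ≤ ((j.1:ℝ)+1+a) * (S j)⁻¹ := by
              apply mul_le_mul_of_nonneg_right _ (le_of_lt (inv_pos.2 (hS j)))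
              linarith
    have hAne : A.Nonempty := ⟨z, hzA⟩
    set k : Fin n := A.max' hAne with hkdef
    have hkA : k ∈ A := A.max'_mem hAne
    have hkT : h k ≤ T := (Finset.mem_filter.1 hkA).2
    -- bound on sum over complement
    have hsplit : (∑ i ∈ A, (h i)⁻¹) +
        (∑ i ∈ (Finset.Iic j).filter (fun i => ¬ h i ≤ T), (h i)⁻¹) = S j :=
      Finset.sum_filter_add_sum_filter_not _ _ _
    have hcomp : (∑ i ∈ (Finset.Iic j).filter (fun i => ¬ h i ≤ T), (h i)⁻¹) ≤
        ((j.1 : ℝ) + 1) * T⁻¹ := by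
      calc (∑ i ∈ (Finset.Iic j).filter (fun i => ¬ h i ≤ T), (h i)⁻¹)
          ≤ ∑ _i ∈ (Finset.Iic j).filter (fun i => ¬ h i ≤ T), T⁻¹ := by
            apply Finset.sum_le_sum
            intro i hi
            have := (Finset.mem_filter.1 hi).2
            exact le_of_lt (inv_strictAnti₀ hT (lt_of_not_ge this))
        _ = (((Finset.Iic j).filter (fun i => ¬ h i ≤ T)).card : ℝ) * T⁻¹ := by
            simp [mul_comm]
        _ ≤ ((j.1 : ℝ) + 1) * T⁻¹ := by
            apply mul_le_mul_of_nonneg_right _ (le_of_lt (inv_pos.2 hT))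
            have := Finset.card_filter_le (Finset.Iic j) (fun i => ¬ h i ≤ T)
            calc ((((Finset.Iic j).filter (fun i => ¬ h i ≤ T)).card : ℝ))
                ≤ ((Finset.Iic j).card : ℝ) := by exact_mod_cast this
              _ = (j.1 : ℝ) + 1 := by rw [Fin.card_Iic]; push_cast; ring
    have hTinv : T⁻¹ = S j / ((j.1:ℝ)+1+a) := by
      rw [hTdef, mul_inv, inv_inv]
      ring
    have hAsum : a * S j / ((j.1:ℝ)+1+a) ≤ ∑ i ∈ A, (h i)⁻¹ := by
      have : (∑ i ∈ A, (h i)⁻¹) ≥ S j - ((j.1 : ℝ) + 1) * T⁻¹ := by linarith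
      rw [hTinv] at this
      have hd : (0:ℝ) < (j.1:ℝ)+1+a := by linarith
      have : S j - ((j.1 : ℝ) + 1) * (S j / ((j.1:ℝ)+1+a)) = a * S j / ((j.1:ℝ)+1+a) := by
        field_simp
        ring
      linarith
    have hASk : (∑ i ∈ A, (h i)⁻¹) ≤ S k := by
      apply Finset.sum_le_sum_of_subset_of_nonneg
      · intro i hi
        exact mem_Iic.2 (A.le_max' i hi)
      · intro i _ _
        exact le_of_lt (inv_pos.2 (hpos i))
    have haSk : a * (S k)⁻¹ ≤ T := by
      rcases eq_or_lt_of_le ha with rfl | ha'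
      · simpa using le_of_lt hT
      · have hd : (0:ℝ) < (j.1:ℝ)+1+a := by linarith
        have h2 : a * S j / ((j.1:ℝ)+1+a) ≤ S k := le_trans hAsum hASk
        have h3 : 0 < a * S j / ((j.1:ℝ)+1+a) := div_pos (mul_pos ha' (hS j)) hd
        have : a / S k ≤ a / (a * S j / ((j.1:ℝ)+1+a)) :=
          div_le_div_of_nonneg_left ha h3 h2
        calc a * (S k)⁻¹ = a / S k := by rw [div_eq_mul_inv]
          _ ≤ a / (a * S j / ((j.1:ℝ)+1+a)) := this
          _ = ((j.1:ℝ)+1+a) * (S j)⁻¹ := by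
              rw [div_div_eq_mul_div, mul_div_mul_left _ _ (ne_of_gt ha'), div_eq_mul_inv]
    have hgk : g k ≤ 2 * T := by
      calc g k = h k + a * (S k)⁻¹ := rfl
        _ ≤ T + T := add_le_add hkT haSk
        _ = 2 * T := by ring
    have h1 : (1/2 : ℝ) * (⨅ j : Fin n, g j) ≤ (1/2 : ℝ) * g k := by
      apply mul_le_mul_of_nonneg_left (ciInf_le bddG k) (by norm_num)
    calc (1/2 : ℝ) * (⨅ j : Fin n, g j) ≤ (1/2 : ℝ) * g k := h1
      _ ≤ T := by nlinarith [hgk]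
  · -- inf p ≤ inf g
    apply le_ciInf
    intro j
    refine le_trans (ciInf_le bddP j) ?_
    show ((j.1 : ℝ) + 1 + a) * (S j)⁻¹ ≤ h j + a * (S j)⁻¹
    have key : ((j.1 : ℝ) + 1) * (S j)⁻¹ ≤ h j := by
      have h1 := hSlb j
      have h2 : ((j.1:ℝ)+1) ≤ h j * S j := by
        have := mul_le_mul_of_nonneg_right h1 (le_of_lt (hpos j))
        calc ((j.1:ℝ)+1) = ((j.1:ℝ)+1) * (h j)⁻¹ * h j := by
              rw [mul_assoc, inv_mul_cancel₀ (ne_of_gt (hpos j)), mul_one]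
          _ ≤ S j * h j := this
          _ = h j * S j := by ring
      rw [← div_le_iff₀ (hS j)] at h2
      rw [div_eq_mul_inv] at h2
      exact h2
    have : ((j.1 : ℝ) + 1 + a) * (S j)⁻¹
        = ((j.1 : ℝ) + 1) * (S j)⁻¹ + a * (S j)⁻¹ := by ring
    linarith
end

section
/- The equilibrium time is monotone: if ω̄ ≥ ω ≥ 0, σ̄²/ε̄ ≥ σ²/ε ≥ 0, and h̄_i ≥ h_i ≥ 0, τ̄_i ≥ τ_i ≥ 0 for all i ∈ [n], then t*(ω̄, σ̄²/ε̄, [h̄_i, τ̄_i]) ≥ t*(ω, σ²/ε, [h_i, τ_i]). -/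
open Finset
open scoped ENNReal

/-- The pairs `(h i, τ i)`, reindexed via the permutation `π`, are sorted
in nondecreasing order of `max (h i) (τ i)`. -/
def SortsPairs {n : ℕ} (h τ : Fin n → ℝ≥0∞) (π : Equiv.Perm (Fin n)) : Prop :=
  Monotone fun i => max (h (π i)) (τ (π i))

/-- `s` solves the defining equation of the equilibrium time for the prefix `{0, …, j}`:
`(∑_{i ≤ j} (2 τ_{π i} ω + 4 τ_{π i} h_{π i} r ω / s + 2 h_{π i} r)⁻¹)⁻¹ = s`,
where `r = σ²/ε` and arithmetic is in `ℝ≥0∞` (so `1/0 = ∞`). -/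
def SolvesEquil {n : ℕ} (w r : ℝ≥0∞) (h τ : Fin n → ℝ≥0∞)
    (π : Equiv.Perm (Fin n)) (j : Fin n) (s : ℝ≥0∞) : Prop :=
  (∑ i ∈ Finset.Iic j,
      (2 * τ (π i) * w + 4 * τ (π i) * h (π i) * r * w / s + 2 * h (π i) * r)⁻¹)⁻¹ = s

/-- The value `min_j max{max{h_{π j}, τ_{π j}}, s j}` of the equilibrium time,
given the sorting permutation `π` and the solutions `s j` of the defining equations. -/
noncomputable def tstarVal {n : ℕ} (h τ : Fin n → ℝ≥0∞) (π : Equiv.Perm (Fin n))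
    (s : Fin n → ℝ≥0∞) : ℝ≥0∞ :=
  ⨅ j, max (max (h (π j)) (τ (π j))) (s j)

/-- Monotonicity of the equilibrium time in all of its arguments. -/
theorem equilibrium_time_monotone (n : ℕ) (hn : 0 < n)
    (w wb r rb : ℝ≥0∞) (h τ hb τb : Fin n → ℝ≥0∞)
    (hw : w ≤ wb) (hr : r ≤ rb) (hh : ∀ i, h i ≤ hb i) (hτ : ∀ i, τ i ≤ τb i)
    (π πb : Equiv.Perm (Fin n))
    (hπ : SortsPairs h τ π) (hπb : SortsPairs hb τb πb)
    (s sb : Fin n → ℝ≥0∞)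
    (hs : ∀ j, SolvesEquil w r h τ π j (s j))
    (hsb : ∀ j, SolvesEquil wb rb hb τb πb j (sb j)) :
    tstarVal h τ π s ≤ tstarVal hb τb πb sb := by
  classical
  have hab : ∀ i, max (h i) (τ i) ≤ max (hb i) (τb i) := fun i =>
    max_le_max (hh i) (hτ i)
  -- order statistics monotonicity
  have horder : ∀ j : Fin n,
      max (h (π j)) (τ (π j)) ≤ max (hb (πb j)) (τb (πb j)) := by
    intro j
    by_contra hcon
    push_neg at hcon
    have hsub : (Finset.Iic j).image πb ⊆ (Finset.Iio j).image π := by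
      intro i hi
      simp only [Finset.mem_image] at hi ⊢
      obtain ⟨m, hm, rfl⟩ := hi
      refine ⟨π.symm (πb m), ?_, by simp⟩
      rw [Finset.mem_Iio]
      by_contra hge
      push_neg at hge
      have h1 := hπ hge
      simp only [Equiv.apply_symm_apply] at h1
      exact absurd (h1.trans ((hab _).trans (hπb (Finset.mem_Iic.mp hm))))
        (not_le.mpr hcon)
    have hc := Finset.card_le_card hsub
    rw [Finset.card_image_of_injective _ πb.injective,
        Finset.card_image_of_injective _ π.injective, Fin.card_Iic, Fin.card_Iio] at hc
    omega
  rw [tstarVal, tstarVal]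
  refine le_iInf fun j => ?_
  set t := max (max (hb (πb j)) (τb (πb j))) (sb j) with ht
  -- the set of prefix positions whose max is at most t
  set K : Finset (Fin n) := Finset.univ.filter
    (fun m => max (h (π m)) (τ (π m)) ≤ t) with hK
  have hmemK : ∀ m : Fin n, m ∈ K ↔ max (h (π m)) (τ (π m)) ≤ t := by
    intro m; simp [hK]
  have hKne : K.Nonempty := by
    refine ⟨π.symm (πb j), ?_⟩
    rw [hmemK]
    simp only [Equiv.apply_symm_apply]
    exact le_trans (hab _) (le_max_left _ _)
  set k := K.max' hKne with hk
  have hkK : max (h (π k)) (τ (π k)) ≤ t := (hmemK k).mp (K.max'_mem hKne)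
  -- key sum inequality
  have hsum : (sb j)⁻¹ ≤
      ∑ i ∈ Finset.Iic k,
        (2 * τ (π i) * w + 4 * τ (π i) * h (π i) * r * w / t + 2 * h (π i) * r)⁻¹ := by
    have hsbj := hsb j
    rw [SolvesEquil] at hsbj
    have e1 : (sb j)⁻¹ = ∑ i ∈ Finset.Iic j,
        (2 * τb (πb i) * wb + 4 * τb (πb i) * hb (πb i) * rb * wb / (sb j)
          + 2 * hb (πb i) * rb)⁻¹ := by
      conv_lhs => rw [← hsbj]
      rw [inv_inv]
    rw [e1]
    have hsble : sb j ≤ t := le_max_right _ _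
    calc
      ∑ i ∈ Finset.Iic j,
          (2 * τb (πb i) * wb + 4 * τb (πb i) * hb (πb i) * rb * wb / (sb j)
            + 2 * hb (πb i) * rb)⁻¹
        ≤ ∑ i ∈ Finset.Iic j,
          (2 * τ (πb i) * w + 4 * τ (πb i) * h (πb i) * r * w / t
            + 2 * h (πb i) * r)⁻¹ := by
          refine Finset.sum_le_sum fun i _ => ?_
          gcongr <;> first
            | exact hτ _ | exact hh _ | exact hw | exact hr | exact hsble
      _ = ∑ m ∈ (Finset.Iic j).image (fun i => π.symm (πb i)),
          (2 * τ (π m) * w + 4 * τ (π m) * h (π m) * r * w / t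
            + 2 * h (π m) * r)⁻¹ := by
          rw [Finset.sum_image (fun a _ b _ hab' => πb.injective (π.symm.injective hab'))]
          simp
      _ ≤ ∑ i ∈ Finset.Iic k,
          (2 * τ (π i) * w + 4 * τ (π i) * h (π i) * r * w / t
            + 2 * h (π i) * r)⁻¹ := by
          refine Finset.sum_le_sum_of_subset ?_
          intro m hm
          simp only [Finset.mem_image] at hm
          obtain ⟨i, hi, rfl⟩ := hm
          rw [Finset.mem_Iic]
          refine K.le_max' _ ?_
          rw [hmemK]
          simp only [Equiv.apply_symm_apply]
          exact le_trans (hab _) (le_trans (hπb (Finset.mem_Iic.mp hi)) (le_max_left _ _))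
  -- hence s k ≤ t
  have hskt : s k ≤ t := by
    rcases le_total (s k) t with hle | hle
    · exact hle
    · have hsk := hs k
      rw [SolvesEquil] at hsk
      rw [← hsk]
      have hmono : ∑ i ∈ Finset.Iic k,
          (2 * τ (π i) * w + 4 * τ (π i) * h (π i) * r * w / t + 2 * h (π i) * r)⁻¹
          ≤ ∑ i ∈ Finset.Iic k,
          (2 * τ (π i) * w + 4 * τ (π i) * h (π i) * r * w / (s k) + 2 * h (π i) * r)⁻¹ := by
        refine Finset.sum_le_sum fun i _ => ?_
        gcongr
      calc (∑ i ∈ Finset.Iic k,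
            (2 * τ (π i) * w + 4 * τ (π i) * h (π i) * r * w / (s k) + 2 * h (π i) * r)⁻¹)⁻¹
          ≤ (∑ i ∈ Finset.Iic k,
            (2 * τ (π i) * w + 4 * τ (π i) * h (π i) * r * w / t + 2 * h (π i) * r)⁻¹)⁻¹ :=
            ENNReal.inv_le_inv'  hmono
        _ ≤ ((sb j)⁻¹)⁻¹ := ENNReal.inv_le_inv' hsum
        _ = sb j := inv_inv _
        _ ≤ t := le_max_right _ _
  exact iInf_le_of_le k (max_le hkK hskt)
end

section
/- For all c ∈ (0,1], scaling both the variance parameter ω and the noise ratio σ²/ε by c scales the equilibrium time down by at most c: t*(cω, c·σ²/ε, [h_i, τ_i]) ≥ c · t*(ω, σ²/ε, [h_i, τ_i]). -/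
open Finset
open scoped ENNReal

/-- For `c ∈ (0,1]`, `t*(cω, c·σ²/ε, [h_i, τ_i]) ≥ c · t*(ω, σ²/ε, [h_i, τ_i])`. -/
theorem equilibrium_time_scale_lower (n : ℕ) (hn : 0 < n)
    (c w r : ℝ≥0∞) (hc0 : 0 < c) (hc1 : c ≤ 1)
    (h τ : Fin n → ℝ≥0∞) (π : Equiv.Perm (Fin n)) (hπ : SortsPairs h τ π)
    (s sc : Fin n → ℝ≥0∞)
    (hs : ∀ j, SolvesEquil w r h τ π j (s j))
    (hsc : ∀ j, SolvesEquil (c * w) (c * r) h τ π j (sc j)) :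
    c * tstarVal h τ π s ≤ tstarVal h τ π sc := by
  have hcinf : c ≠ ∞ := (lt_of_le_of_lt hc1 (by norm_num)).ne
  have hc0' : c ≠ 0 := hc0.ne'
  have hcc : c * c * c⁻¹ = c := by
    rw [mul_assoc, ENNReal.mul_inv_cancel hc0' hcinf, mul_one]
  have key : ∀ j, sc j = c * s j := by
    intro j
    set G : ℝ≥0∞ → ℝ≥0∞ := fun t => (∑ i ∈ Finset.Iic j,
        (2 * τ (π i) * (c * w) + 4 * τ (π i) * h (π i) * (c * r) * (c * w) / t
          + 2 * h (π i) * (c * r))⁻¹)⁻¹ with hG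
    have hGanti : Antitone G := by
      intro t1 t2 hle
      simp only [hG]
      refine ENNReal.inv_le_inv.mpr (Finset.sum_le_sum fun i _ => ENNReal.inv_le_inv.mpr ?_)
      gcongr
    have hfix2 : G (sc j) = sc j := hsc j
    have hfix1 : G (c * s j) = c * s j := by
      have hterm : ∀ i : Fin n,
          2 * τ (π i) * (c * w) + 4 * τ (π i) * h (π i) * (c * r) * (c * w) / (c * s j)
            + 2 * h (π i) * (c * r)
          = c * (2 * τ (π i) * w + 4 * τ (π i) * h (π i) * r * w / s j
            + 2 * h (π i) * r) := by
        intro i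
        rw [div_eq_mul_inv, div_eq_mul_inv,
          ENNReal.mul_inv (Or.inl hc0') (Or.inl hcinf)]
        calc 2 * τ (π i) * (c * w)
              + 4 * τ (π i) * h (π i) * (c * r) * (c * w) * (c⁻¹ * (s j)⁻¹)
              + 2 * h (π i) * (c * r)
            = c * (2 * τ (π i) * w)
              + (c * c * c⁻¹) * (4 * τ (π i) * h (π i) * r * w * (s j)⁻¹)
              + c * (2 * h (π i) * r) := by ring
          _ = c * (2 * τ (π i) * w + 4 * τ (π i) * h (π i) * r * w * (s j)⁻¹
              + 2 * h (π i) * r) := by rw [hcc]; ring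
      have hS : (∑ i ∈ Finset.Iic j,
          (2 * τ (π i) * w + 4 * τ (π i) * h (π i) * r * w / s j
            + 2 * h (π i) * r)⁻¹)⁻¹ = s j := hs j
      simp only [hG, hterm]
      have : ∀ i : Fin n,
          (c * (2 * τ (π i) * w + 4 * τ (π i) * h (π i) * r * w / s j
            + 2 * h (π i) * r))⁻¹
          = c⁻¹ * (2 * τ (π i) * w + 4 * τ (π i) * h (π i) * r * w / s j
            + 2 * h (π i) * r)⁻¹ :=
        fun i => ENNReal.mul_inv (Or.inl hc0') (Or.inl hcinf)
      rw [Finset.sum_congr rfl fun i _ => this i, ← Finset.mul_sum,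
        ENNReal.mul_inv (Or.inl (ENNReal.inv_ne_zero.mpr hcinf))
          (Or.inl (ENNReal.inv_ne_top.mpr hc0')), inv_inv, hS]
    rcases le_total (sc j) (c * s j) with hle | hle
    · exact le_antisymm hle (by rw [← hfix1, ← hfix2]; exact hGanti hle)
    · exact le_antisymm (by rw [← hfix2, ← hfix1]; exact hGanti hle) hle
  refine le_iInf fun j => ?_
  have h1 : c * tstarVal h τ π s
      ≤ c * max (max (h (π j)) (τ (π j))) (s j) :=
    mul_le_mul_right (iInf_le _ j) c
  refine h1.trans ?_
  rw [key j]
  rcases max_choice (max (h (π j)) (τ (π j))) (s j) with hm | hm <;> rw [hm]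
  · refine le_max_of_le_left ?_
    calc c * (max (h (π j)) (τ (π j))) ≤ 1 * (max (h (π j)) (τ (π j))) :=
          mul_le_mul_left hc1 _
      _ = _ := one_mul _
  · exact le_max_right _ _
end

section
/- For all c ≥ 1, t*(cω, c·σ²/ε, [h_i, τ_i]) ≤ c · t*(ω, σ²/ε, [h_i, τ_i]), where t* is the equilibrium time. -/
open Finset
open scoped ENNReal

-- The map `s ↦ (∑ …)⁻¹` is antitone, so its fixed point is unique.
lemma fixed_unique {n : ℕ} (w r : ℝ≥0∞) (h τ : Fin n → ℝ≥0∞)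
    (π : Equiv.Perm (Fin n)) (j : Fin n) (s₁ s₂ : ℝ≥0∞)
    (h1 : SolvesEquil w r h τ π j s₁) (h2 : SolvesEquil w r h τ π j s₂) : s₁ = s₂ := by
  have anti : ∀ a b : ℝ≥0∞, a ≤ b →
      (∑ i ∈ Finset.Iic j,
        (2 * τ (π i) * w + 4 * τ (π i) * h (π i) * r * w / b + 2 * h (π i) * r)⁻¹)⁻¹ ≤
      (∑ i ∈ Finset.Iic j,
        (2 * τ (π i) * w + 4 * τ (π i) * h (π i) * r * w / a + 2 * h (π i) * r)⁻¹)⁻¹ := by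
    intro a b hab
    refine ENNReal.inv_le_inv.2 (Finset.sum_le_sum fun i _ => ENNReal.inv_le_inv.2 ?_)
    gcongr
  rcases le_total s₁ s₂ with hle | hle
  · exact le_antisymm hle (by rw [← h1, ← h2]; exact anti _ _ hle)
  · exact le_antisymm (by rw [← h1, ← h2]; exact anti _ _ hle) hle

lemma scaled_fixed {n : ℕ} (c w r : ℝ≥0∞) (hc0 : c ≠ 0) (hc : c ≠ ⊤)
    (h τ : Fin n → ℝ≥0∞) (π : Equiv.Perm (Fin n)) (j : Fin n) (s : ℝ≥0∞)
    (hs : SolvesEquil w r h τ π j s) : SolvesEquil (c * w) (c * r) h τ π j (c * s) := by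
  unfold SolvesEquil at hs ⊢
  have key : ∀ i : Fin n,
      2 * τ (π i) * (c * w) + 4 * τ (π i) * h (π i) * (c * r) * (c * w) / (c * s)
        + 2 * h (π i) * (c * r)
      = c * (2 * τ (π i) * w + 4 * τ (π i) * h (π i) * r * w / s + 2 * h (π i) * r) := by
    intro i
    have : 4 * τ (π i) * h (π i) * (c * r) * (c * w) / (c * s)
        = c * (4 * τ (π i) * h (π i) * r * w / s) := by
      rw [show 4 * τ (π i) * h (π i) * (c * r) * (c * w)
          = c * (c * (4 * τ (π i) * h (π i) * r * w)) by ring,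
        mul_div_assoc, ENNReal.mul_div_mul_left _ _ hc0 hc]
    rw [this]; ring
  simp only [key]
  have hsum : ∑ i ∈ Finset.Iic j,
      (c * (2 * τ (π i) * w + 4 * τ (π i) * h (π i) * r * w / s + 2 * h (π i) * r))⁻¹
      = c⁻¹ * ∑ i ∈ Finset.Iic j,
      (2 * τ (π i) * w + 4 * τ (π i) * h (π i) * r * w / s + 2 * h (π i) * r)⁻¹ := by
    rw [Finset.mul_sum]
    refine Finset.sum_congr rfl fun i _ => ?_
    rw [ENNReal.mul_inv (Or.inl hc0) (Or.inl hc)]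
  rw [hsum, ENNReal.mul_inv (Or.inl (by simpa using hc)) (Or.inl (by simpa using hc0)),
    inv_inv, hs]

/-- For `c ≥ 1`, `t*(cω, c·σ²/ε, [h_i, τ_i]) ≤ c · t*(ω, σ²/ε, [h_i, τ_i])`. -/
theorem equilibrium_time_scale_upper (n : ℕ) (hn : 0 < n)
    (c w r : ℝ≥0∞) (hc1 : 1 ≤ c) (hc : c ≠ ⊤)
    (h τ : Fin n → ℝ≥0∞) (π : Equiv.Perm (Fin n)) (hπ : SortsPairs h τ π)
    (s sc : Fin n → ℝ≥0∞)
    (hs : ∀ j, SolvesEquil w r h τ π j (s j))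
    (hsc : ∀ j, SolvesEquil (c * w) (c * r) h τ π j (sc j)) :
    tstarVal h τ π sc ≤ c * tstarVal h τ π s := by
  have hc0 : c ≠ 0 := by intro h0; simp [h0] at hc1
  have hsc' : ∀ j, sc j = c * s j := fun j =>
    fixed_unique _ _ _ _ _ _ _ _ (hsc j) (scaled_fixed c w r hc0 hc h τ π j (s j) (hs j))
  unfold tstarVal
  have : Nonempty (Fin n) := ⟨⟨0, hn⟩⟩
  rw [ENNReal.mul_iInf_of_ne hc0 hc]
  refine iInf_mono fun j => ?_
  rw [hsc' j]
  calc max (max (h (π j)) (τ (π j))) (c * s j)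
      ≤ max (c * max (h (π j)) (τ (π j))) (c * s j) := by
        gcongr
        exact le_mul_of_one_le_left zero_le hc1
    _ = c * max (max (h (π j)) (τ (π j))) (s j) := (mul_max_of_nonneg _ _ zero_le).symm
end

section
/- Restricting the set of workers can only increase the equilibrium time: for any nonempty subset S = {k_1, ..., k_m} of [n], t*(ω, σ²/ε, [h_i, τ_i]_{i=1}^n) ≤ t*(ω, σ²/ε, [h_{k_i}, τ_{k_i}]_{i=1}^m). -/
open Finset
open scoped ENNReal

/-- A single summand of the equilibrium equation, as a function of the time `t`. -/
noncomputable def eqTerm (w r hh tt t : ℝ≥0∞) : ℝ≥0∞ :=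
  (2 * tt * w + 4 * tt * hh * r * w / t + 2 * hh * r)⁻¹

lemma eqTerm_mono (w r hh tt : ℝ≥0∞) : Monotone (eqTerm w r hh tt) := by
  intro a b hab
  unfold eqTerm
  gcongr

/-- The "mass" function: sum of `eqTerm` over all workers with `max h τ ≤ t`. -/
noncomputable def Phi (w r : ℝ≥0∞) {n : ℕ} (h τ : Fin n → ℝ≥0∞) (t : ℝ≥0∞) : ℝ≥0∞ :=
  ∑ i ∈ univ.filter (fun i => max (h i) (τ i) ≤ t), eqTerm w r (h i) (τ i) t

lemma claimA {n : ℕ} (w r : ℝ≥0∞) (h τ : Fin n → ℝ≥0∞) (π : Equiv.Perm (Fin n))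
    (hπ : SortsPairs h τ π) (j : Fin n) (sj : ℝ≥0∞) (hs : SolvesEquil w r h τ π j sj) :
    (max (max (h (π j)) (τ (π j))) sj)⁻¹ ≤
      Phi w r h τ (max (max (h (π j)) (τ (π j))) sj) := by
  set t := max (max (h (π j)) (τ (π j))) sj with ht
  have hsum : ∑ i ∈ Iic j, eqTerm w r (h (π i)) (τ (π i)) sj = sj⁻¹ := by
    unfold SolvesEquil at hs
    conv_rhs => rw [← hs]
    rw [inv_inv]
    rfl
  calc t⁻¹ ≤ sj⁻¹ := ENNReal.inv_le_inv.mpr (le_max_right _ _)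
    _ = ∑ i ∈ Iic j, eqTerm w r (h (π i)) (τ (π i)) sj := hsum.symm
    _ ≤ ∑ i ∈ Iic j, eqTerm w r (h (π i)) (τ (π i)) t := by
        exact Finset.sum_le_sum fun i _ => eqTerm_mono w r _ _ (le_max_right _ _)
    _ = ∑ x ∈ (Iic j).image π, eqTerm w r (h x) (τ x) t := by
        rw [Finset.sum_image (fun a _ b _ hab => π.injective hab)]
    _ ≤ Phi w r h τ t := by
        apply Finset.sum_le_sum_of_subset
        intro x hx
        obtain ⟨i, hi, rfl⟩ := Finset.mem_image.mp hx
        refine Finset.mem_filter.mpr ⟨Finset.mem_univ _, ?_⟩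
        exact le_trans (hπ (Finset.mem_Iic.mp hi)) (le_max_left _ _)

lemma claimB {n : ℕ} (w r : ℝ≥0∞) (h τ : Fin n → ℝ≥0∞) (π : Equiv.Perm (Fin n))
    (hπ : SortsPairs h τ π) (s : Fin n → ℝ≥0∞)
    (hs : ∀ j, SolvesEquil w r h τ π j (s j)) (hn : 0 < n)
    (t : ℝ≥0∞) (ht : t⁻¹ ≤ Phi w r h τ t) :
    tstarVal h τ π s ≤ t := by
  by_cases hJ : (univ.filter (fun i : Fin n => max (h (π i)) (τ (π i)) ≤ t)).Nonempty
  · set J : Finset (Fin n) := univ.filter (fun i : Fin n => max (h (π i)) (τ (π i)) ≤ t) with hJdef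
    set j := J.max' hJ with hj
    have hjJ : j ∈ J := J.max'_mem hJ
    have hjle : max (h (π j)) (τ (π j)) ≤ t := (Finset.mem_filter.mp hjJ).2
    have hJeq : J = Iic j := by
      ext i
      simp only [hJdef, Finset.mem_filter, Finset.mem_univ, true_and, Finset.mem_Iic]
      constructor
      · intro hi
        exact J.le_max' i (Finset.mem_filter.mpr ⟨Finset.mem_univ _, hi⟩)
      · intro hi
        exact le_trans (hπ hi) hjle
    have hPhi : Phi w r h τ t = ∑ i ∈ Iic j, eqTerm w r (h (π i)) (τ (π i)) t := by
      unfold Phi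
      rw [Finset.sum_filter]
      rw [← Equiv.sum_comp π (fun i => if max (h i) (τ i) ≤ t then eqTerm w r (h i) (τ i) t else 0)]
      rw [← Finset.sum_filter, ← hJdef, hJeq]
    have hGle : (∑ i ∈ Iic j, eqTerm w r (h (π i)) (τ (π i)) t)⁻¹ ≤ t := by
      rw [hPhi] at ht
      calc (∑ i ∈ Iic j, eqTerm w r (h (π i)) (τ (π i)) t)⁻¹
          ≤ (t⁻¹)⁻¹ := ENNReal.inv_le_inv.mpr ht
        _ = t := inv_inv t
    have hsj : s j ≤ t := by
      by_contra hlt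
      push_neg at hlt
      have heq : (∑ i ∈ Iic j, eqTerm w r (h (π i)) (τ (π i)) (s j))⁻¹ = s j := hs j
      have : s j ≤ t := by
        calc s j = (∑ i ∈ Iic j, eqTerm w r (h (π i)) (τ (π i)) (s j))⁻¹ := heq.symm
          _ ≤ (∑ i ∈ Iic j, eqTerm w r (h (π i)) (τ (π i)) t)⁻¹ := by
              apply ENNReal.inv_le_inv.mpr
              exact Finset.sum_le_sum fun i _ => eqTerm_mono w r _ _ hlt.le
          _ ≤ t := hGle
      exact absurd this (not_le.mpr hlt)
    calc tstarVal h τ π s ≤ max (max (h (π j)) (τ (π j))) (s j) := iInf_le _ j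
      _ ≤ t := max_le hjle hsj
  · have hfe : univ.filter (fun i : Fin n => max (h i) (τ i) ≤ t) = ∅ := by
      rw [Finset.filter_eq_empty_iff]
      intro i _ hcon
      exact hJ ⟨π.symm i, Finset.mem_filter.mpr ⟨Finset.mem_univ _, by simpa using hcon⟩⟩
    have hPhi0 : Phi w r h τ t = 0 := by
      unfold Phi; rw [hfe, Finset.sum_empty]
    have h0 : t⁻¹ = 0 := le_antisymm (hPhi0 ▸ ht) zero_le
    have htop : t = ⊤ := ENNReal.inv_eq_zero.mp h0
    rw [htop]; exact le_top

/-- Restricting to a nonempty subset `{k 0, …, k (m-1)}` of the workers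
can only increase the equilibrium time. -/
theorem equilibrium_time_subset (n m : ℕ) (hn : 0 < n) (hm : 0 < m)
    (w r : ℝ≥0∞) (h τ : Fin n → ℝ≥0∞)
    (k : Fin m → Fin n) (hk : Function.Injective k)
    (π : Equiv.Perm (Fin n)) (hπ : SortsPairs h τ π)
    (ρ : Equiv.Perm (Fin m)) (hρ : SortsPairs (h ∘ k) (τ ∘ k) ρ)
    (s : Fin n → ℝ≥0∞) (s' : Fin m → ℝ≥0∞)
    (hs : ∀ j, SolvesEquil w r h τ π j (s j))
    (hs' : ∀ j, SolvesEquil w r (h ∘ k) (τ ∘ k) ρ j (s' j)) :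
    tstarVal h τ π s ≤ tstarVal (h ∘ k) (τ ∘ k) ρ s' := by
  rw [tstarVal]
  apply le_iInf
  intro j'
  set t := max (max ((h ∘ k) (ρ j')) ((τ ∘ k) (ρ j'))) (s' j') with htdef
  have hA : t⁻¹ ≤ Phi w r (h ∘ k) (τ ∘ k) t :=
    claimA w r (h ∘ k) (τ ∘ k) ρ hρ j' (s' j') (hs' j')
  have hsub : Phi w r (h ∘ k) (τ ∘ k) t ≤ Phi w r h τ t := by
    unfold Phi
    calc ∑ i ∈ univ.filter (fun i => max ((h ∘ k) i) ((τ ∘ k) i) ≤ t),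
            eqTerm w r ((h ∘ k) i) ((τ ∘ k) i) t
        = ∑ x ∈ (univ.filter (fun i => max ((h ∘ k) i) ((τ ∘ k) i) ≤ t)).image k,
            eqTerm w r (h x) (τ x) t := by
          rw [Finset.sum_image (fun a _ b _ hab => hk hab)]
          rfl
      _ ≤ ∑ i ∈ univ.filter (fun i => max (h i) (τ i) ≤ t), eqTerm w r (h i) (τ i) t := by
          apply Finset.sum_le_sum_of_subset
          intro x hx
          obtain ⟨i, hi, rfl⟩ := Finset.mem_image.mp hx
          exact Finset.mem_filter.mpr ⟨Finset.mem_univ _, (Finset.mem_filter.mp hi).2⟩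
  exact claimB w r h τ π hπ s hs hn t (hA.trans hsub)
end

section
/- If max{h_i, τ_i} = ∞ for all i > p (with 1 ≤ p ≤ n), then t*(ω, σ²/ε, [h_i, τ_i]_{i=1}^n) = t*(ω, σ²/ε, [h_i, τ_i]_{i=1}^p): workers with infinite processing time do not affect the equilibrium time. -/
open Finset
open scoped ENNReal

/-- Auxiliary: the summand of the equilibrium equation. -/
noncomputable def gterm (w r hv tv t : ℝ≥0∞) : ℝ≥0∞ :=
  (2 * tv * w + 4 * tv * hv * r * w / t + 2 * hv * r)⁻¹

lemma gterm_mono (w r hv tv : ℝ≥0∞) : Monotone (gterm w r hv tv) := by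
  intro a b hab
  simp only [gterm]
  rw [ENNReal.inv_le_inv]
  gcongr

/-- Comparison of solutions of the equilibrium equation: larger index set gives a
smaller (or equal) solution. -/
lemma sol_le {ι : Type*} (w r : ℝ≥0∞) (H T : ι → ℝ≥0∞)
    (A B : Finset ι) (hAB : A ⊆ B) (a b : ℝ≥0∞)
    (ha : (∑ i ∈ A, gterm w r (H i) (T i) a)⁻¹ = a)
    (hb : (∑ i ∈ B, gterm w r (H i) (T i) b)⁻¹ = b) : b ≤ a := by
  by_contra hlt
  push_neg at hlt
  have h1 : a⁻¹ ≤ b⁻¹ := by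
    have ha' : (∑ i ∈ A, gterm w r (H i) (T i) a) = a⁻¹ := by
      conv_rhs => rw [← ha]
      rw [inv_inv]
    have hb' : (∑ i ∈ B, gterm w r (H i) (T i) b) = b⁻¹ := by
      conv_rhs => rw [← hb]
      rw [inv_inv]
    rw [← ha', ← hb']
    calc ∑ i ∈ A, gterm w r (H i) (T i) a
        ≤ ∑ i ∈ A, gterm w r (H i) (T i) b :=
          Finset.sum_le_sum fun i _ => gterm_mono w r (H i) (T i) hlt.le
      _ ≤ ∑ i ∈ B, gterm w r (H i) (T i) b :=
          Finset.sum_le_sum_of_subset hAB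
  exact absurd (ENNReal.inv_le_inv.mp h1) (not_le.mpr hlt)

/-- For any threshold `c` attained by some worker, the prefix consisting of all
workers with `max (h i) (τ i) ≤ c` occurs as a prefix `Iic j₂` of the sorted order,
and the corresponding solution is minimal among all prefixes reaching `c`, and solves
the order-free equation over the filter set. -/
lemma prefix_eq {n : ℕ} (w r : ℝ≥0∞) (h τ : Fin n → ℝ≥0∞) (π : Equiv.Perm (Fin n))
    (hπ : SortsPairs h τ π) (s : Fin n → ℝ≥0∞) (hs : ∀ j, SolvesEquil w r h τ π j (s j))
    (c : ℝ≥0∞) (i0 : Fin n) (hi0 : max (h i0) (τ i0) ≤ c) :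
    ∃ j₂ : Fin n, max (h (π j₂)) (τ (π j₂)) ≤ c ∧
      (∀ j, max (h (π j)) (τ (π j)) ≤ c → s j₂ ≤ s j) ∧
      (∑ i ∈ Finset.univ.filter (fun i => max (h i) (τ i) ≤ c),
          gterm w r (h i) (τ i) (s j₂))⁻¹ = s j₂ := by
  classical
  have hAne : (Finset.univ.filter fun j : Fin n => max (h (π j)) (τ (π j)) ≤ c).Nonempty := by
    refine ⟨π.symm i0, ?_⟩
    simp only [Finset.mem_filter, Finset.mem_univ, true_and, Equiv.apply_symm_apply]
    exact hi0
  set j₂ := (Finset.univ.filter fun j : Fin n => max (h (π j)) (τ (π j)) ≤ c).max' hAne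
    with hj2def
  have hmem : max (h (π j₂)) (τ (π j₂)) ≤ c := by
    have := Finset.max'_mem _ hAne
    rw [← hj2def] at this
    simpa using this
  have hle : ∀ j, max (h (π j)) (τ (π j)) ≤ c → j ≤ j₂ := fun j hj =>
    Finset.le_max' _ j (by simpa using hj)
  refine ⟨j₂, hmem, ?_, ?_⟩
  · intro j hj
    have hsub : Finset.Iic j ⊆ Finset.Iic j₂ := Finset.Iic_subset_Iic.mpr (hle j hj)
    exact sol_le w r (fun i => h (π i)) (fun i => τ (π i)) (Finset.Iic j) (Finset.Iic j₂)
      hsub (s j) (s j₂) (hs j) (hs j₂)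
  · have himg : (Finset.Iic j₂).image π
        = Finset.univ.filter fun i => max (h i) (τ i) ≤ c := by
      ext i
      simp only [Finset.mem_image, Finset.mem_Iic, Finset.mem_filter, Finset.mem_univ, true_and]
      constructor
      · rintro ⟨j, hj, rfl⟩
        exact le_trans (hπ hj) hmem
      · intro hi
        refine ⟨π.symm i, hle _ ?_, π.apply_symm_apply i⟩
        simpa only [Equiv.apply_symm_apply] using hi
    have h2 : (∑ i ∈ Finset.Iic j₂, gterm w r (h (π i)) (τ (π i)) (s j₂))⁻¹ = s j₂ := hs j₂
    rw [← himg, Finset.sum_image (fun a _ b _ hab => π.injective hab)]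
    exact h2

/-- Linking lemma: for a finite threshold `c` attained by some worker, the
order-free prefix solutions of the full system and of the truncated system agree. -/
lemma link {n p : ℕ} (hpn : p ≤ n) (w r : ℝ≥0∞) (h τ : Fin n → ℝ≥0∞)
    (hslow : ∀ i : Fin n, p ≤ (i : ℕ) → max (h i) (τ i) = ⊤)
    (π : Equiv.Perm (Fin n)) (hπ : SortsPairs h τ π)
    (ρ : Equiv.Perm (Fin p))
    (hρ : SortsPairs (fun i : Fin p => h (Fin.castLE hpn i))
      (fun i : Fin p => τ (Fin.castLE hpn i)) ρ)
    (s : Fin n → ℝ≥0∞) (s' : Fin p → ℝ≥0∞)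
    (hs : ∀ j, SolvesEquil w r h τ π j (s j))
    (hs' : ∀ j, SolvesEquil w r (fun i : Fin p => h (Fin.castLE hpn i))
      (fun i : Fin p => τ (Fin.castLE hpn i)) ρ j (s' j))
    (c : ℝ≥0∞) (hc : c ≠ ⊤) (i0 : Fin n) (hi0 : max (h i0) (τ i0) ≤ c) :
    ∃ (j₂ : Fin n) (j₃ : Fin p),
      max (h (π j₂)) (τ (π j₂)) ≤ c ∧
      max (h (Fin.castLE hpn (ρ j₃))) (τ (Fin.castLE hpn (ρ j₃))) ≤ c ∧
      s j₂ = s' j₃ ∧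
      (∀ j, max (h (π j)) (τ (π j)) ≤ c → s j₂ ≤ s j) ∧
      (∀ j, max (h (Fin.castLE hpn (ρ j))) (τ (Fin.castLE hpn (ρ j))) ≤ c → s' j₃ ≤ s' j) := by
  classical
  -- workers with value ≤ c lie below p
  have hltp : ∀ i : Fin n, max (h i) (τ i) ≤ c → (i : ℕ) < p := by
    intro i hi
    by_contra hge
    push_neg at hge
    rw [hslow i hge] at hi
    exact hc (top_le_iff.mp hi)
  obtain ⟨j₂, hj₂c, hj₂min, hj₂eq⟩ := prefix_eq w r h τ π hπ s hs c i0 hi0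
  have hi0p : (i0 : ℕ) < p := hltp i0 hi0
  obtain ⟨j₃, hj₃c, hj₃min, hj₃eq⟩ := prefix_eq w r (fun i : Fin p => h (Fin.castLE hpn i))
    (fun i : Fin p => τ (Fin.castLE hpn i)) ρ hρ s' hs' c ⟨(i0 : ℕ), hi0p⟩ hi0
  -- the two filter sets agree via castLE
  have himg : (Finset.univ.filter fun i : Fin p =>
        max (h (Fin.castLE hpn i)) (τ (Fin.castLE hpn i)) ≤ c).image (Fin.castLE hpn)
      = Finset.univ.filter fun i : Fin n => max (h i) (τ i) ≤ c := by
    ext i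
    simp only [Finset.mem_image, Finset.mem_filter, Finset.mem_univ, true_and]
    constructor
    · rintro ⟨i', hi', rfl⟩
      exact hi'
    · intro hi
      exact ⟨⟨(i : ℕ), hltp i hi⟩, hi, rfl⟩
  have hj₃eq' : (∑ i ∈ Finset.univ.filter (fun i : Fin n => max (h i) (τ i) ≤ c),
      gterm w r (h i) (τ i) (s' j₃))⁻¹ = s' j₃ := by
    rw [← himg, Finset.sum_image (fun a _ b _ hab => Fin.castLE_injective hpn hab)]
    exact hj₃eq
  have hsseq : s j₂ = s' j₃ := by
    refine le_antisymm ?_ ?_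
    · exact sol_le w r h τ _ _ (le_refl _) (s' j₃) (s j₂) hj₃eq' hj₂eq
    · exact sol_le w r h τ _ _ (le_refl _) (s j₂) (s' j₃) hj₂eq hj₃eq'
  exact ⟨j₂, j₃, hj₂c, hj₃c, hsseq, hj₂min, hj₃min⟩

/-- Partial participation: workers `i` with index `≥ p` having `max{h_i, τ_i} = ∞`
do not affect the equilibrium time, which equals the equilibrium time of the first
`p` workers. -/
theorem equilibrium_time_partial_participation (n p : ℕ) (hp1 : 1 ≤ p) (hpn : p ≤ n)
    (w r : ℝ≥0∞) (h τ : Fin n → ℝ≥0∞)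
    (hslow : ∀ i : Fin n, p ≤ (i : ℕ) → max (h i) (τ i) = ⊤)
    (π : Equiv.Perm (Fin n)) (hπ : SortsPairs h τ π)
    (ρ : Equiv.Perm (Fin p))
    (hρ : SortsPairs (fun i : Fin p => h (Fin.castLE hpn i))
      (fun i : Fin p => τ (Fin.castLE hpn i)) ρ)
    (s : Fin n → ℝ≥0∞) (s' : Fin p → ℝ≥0∞)
    (hs : ∀ j, SolvesEquil w r h τ π j (s j))
    (hs' : ∀ j, SolvesEquil w r (fun i : Fin p => h (Fin.castLE hpn i))
      (fun i : Fin p => τ (Fin.castLE hpn i)) ρ j (s' j)) :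
    tstarVal h τ π s =
      tstarVal (fun i : Fin p => h (Fin.castLE hpn i))
        (fun i : Fin p => τ (Fin.castLE hpn i)) ρ s' := by
  classical
  rw [tstarVal, tstarVal]
  apply le_antisymm
  · apply le_iInf
    intro j
    by_cases hc : max (h (Fin.castLE hpn (ρ j))) (τ (Fin.castLE hpn (ρ j))) = ⊤
    · have hne : Nonempty (Fin n) := ⟨⟨0, lt_of_lt_of_le hp1 hpn⟩⟩
      exact le_trans (iInf_le _ hne.some) (by simp [hc])
    · obtain ⟨j₂, j₃, hj₂c, hj₃c, hseq, hj₂min, hj₃min⟩ :=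
        link hpn w r h τ hslow π hπ ρ hρ s s' hs hs'
          (max (h (Fin.castLE hpn (ρ j))) (τ (Fin.castLE hpn (ρ j)))) hc
          (Fin.castLE hpn (ρ j)) (le_refl _)
      refine iInf_le_of_le j₂ (max_le ?_ ?_)
      · exact le_trans hj₂c (le_max_left _ _)
      · rw [hseq]
        exact le_trans (hj₃min j (le_refl _)) (le_max_right _ _)
  · apply le_iInf
    intro j
    by_cases hc : max (h (π j)) (τ (π j)) = ⊤
    · have hne : Nonempty (Fin p) := ⟨⟨0, hp1⟩⟩
      exact le_trans (iInf_le _ hne.some) (by simp [hc])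
    · obtain ⟨j₂, j₃, hj₂c, hj₃c, hseq, hj₂min, hj₃min⟩ :=
        link hpn w r h τ hslow π hπ ρ hρ s s' hs hs'
          (max (h (π j)) (τ (π j))) hc (π j) (le_refl _)
      refine iInf_le_of_le j₃ (max_le ?_ ?_)
      · exact le_trans hj₃c (le_max_left _ _)
      · rw [← hseq]
        exact le_trans (hj₂min j (le_refl _)) (le_max_right _ _)
end

section
/- When all communication times are zero (τ_i = 0 for all i), the equilibrium time satisfies t* ≤ 2 min_{m∈[n]} max{h_{π_m}, (σ²/ε)(Σ_{i=1}^m 1/h_{π_i})^{-1}}, where π sorts the h_i in nondecreasing order. -/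
open Finset
open scoped ENNReal

lemma aux_inv_mul_inv_le {a b : ℝ≥0∞} : a⁻¹ * b⁻¹ ≤ (a * b)⁻¹ := by
  rcases eq_or_ne a 0 with rfl | ha0
  · simp
  rcases eq_or_ne b ∞ with rfl | hbt
  · simp
  rcases eq_or_ne a ∞ with rfl | hat
  · rcases eq_or_ne b 0 with rfl | hb0
    · simp
    · simp [ENNReal.top_mul hb0]
  · rw [ENNReal.mul_inv (Or.inl ha0) (Or.inl hat)]

/-- Infinitely fast communication: when all `τ_i = 0`, the equilibrium time satisfies
`t* ≤ 2 · min_m max{h_{π m}, (σ²/ε) (∑_{i ≤ m} 1/h_{π i})⁻¹}`, where `π` sorts the `h_i`. -/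
theorem equilibrium_time_zero_communication (n : ℕ) (hn : 0 < n)
    (w r : ℝ≥0∞) (h : Fin n → ℝ≥0∞)
    (π : Equiv.Perm (Fin n)) (hπ : SortsPairs h (fun _ => 0) π)
    (s : Fin n → ℝ≥0∞) (hs : ∀ j, SolvesEquil w r h (fun _ => 0) π j (s j)) :
    tstarVal h (fun _ => 0) π s ≤
      2 * ⨅ m : Fin n,
        max (h (π m)) (r * (∑ i ∈ Finset.Iic m, (h (π i))⁻¹)⁻¹) := by
  haveI : Nonempty (Fin n) := ⟨⟨0, hn⟩⟩
  set f : Fin n → ℝ≥0∞ :=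
    fun m => max (h (π m)) (r * (∑ i ∈ Finset.Iic m, (h (π i))⁻¹)⁻¹) with hf
  obtain ⟨m, hm⟩ := Finite.exists_min f
  have hfi : (⨅ m, f m) = f m := le_antisymm (iInf_le _ m) (le_iInf hm)
  rw [hfi]
  have hsm : (∑ i ∈ Finset.Iic m, (2 * h (π i) * r)⁻¹)⁻¹ = s m := by
    simpa [SolvesEquil] using hs m
  set T : ℝ≥0∞ := ∑ i ∈ Finset.Iic m, (h (π i))⁻¹ with hT
  have key : s m ≤ 2 * (r * T⁻¹) := by
    rcases eq_or_ne r 0 with rfl | hr0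
    · -- each summand is `0⁻¹ = ∞`
      rw [← hsm]
      have htop : (∑ i ∈ Finset.Iic m, (2 * h (π i) * (0:ℝ≥0∞))⁻¹) = ∞ := by
        refine ENNReal.sum_eq_top.mpr ⟨m, Finset.mem_Iic.mpr le_rfl, ?_⟩
        simp
      simp [htop]
    rcases eq_or_ne r ∞ with rfl | hrt
    · by_cases hzero : ∃ i ∈ Finset.Iic m, h (π i) = 0
      · obtain ⟨i, hi, h0⟩ := hzero
        rw [← hsm]
        have htop : (∑ i ∈ Finset.Iic m, (2 * h (π i) * (∞:ℝ≥0∞))⁻¹) = ∞ :=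
          ENNReal.sum_eq_top.mpr ⟨i, hi, by simp [h0]⟩
        simp [htop]
      · push_neg at hzero
        have hTne : T ≠ ∞ := by
          rw [hT]
          refine (ENNReal.sum_lt_top.mpr fun i hi => ?_).ne
          exact ENNReal.inv_lt_top.mpr (pos_iff_ne_zero.mpr (hzero i hi))
        have : (∞ : ℝ≥0∞) * T⁻¹ = ∞ :=
          ENNReal.top_mul (by simpa [ENNReal.inv_ne_zero] using hTne)
        rw [this]
        simp
    · -- generic case : 0 < r < ∞
      have hterm : ∀ i, 2⁻¹ * r⁻¹ * (h (π i))⁻¹ ≤ (2 * h (π i) * r)⁻¹ := by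
        intro i
        have he : 2 * h (π i) * r = 2 * r * h (π i) := by ring
        have h2r0 : (2:ℝ≥0∞) * r ≠ 0 := by
          simp [hr0]
        have h2rt : (2:ℝ≥0∞) * r ≠ ∞ := ENNReal.mul_ne_top (by simp) hrt
        rw [he, ENNReal.mul_inv (Or.inl h2r0) (Or.inl h2rt),
          ENNReal.mul_inv (Or.inl two_ne_zero) (Or.inl ENNReal.ofNat_ne_top)]
      have hsum : 2⁻¹ * r⁻¹ * T ≤ ∑ i ∈ Finset.Iic m, (2 * h (π i) * r)⁻¹ := by
        rw [hT, Finset.mul_sum]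
        exact Finset.sum_le_sum fun i _ => hterm i
      have h1 : s m ≤ (2⁻¹ * r⁻¹ * T)⁻¹ := by
        rw [← hsm]
        exact ENNReal.inv_le_inv.mpr hsum
      refine h1.trans_eq ?_
      have h2r0 : (2:ℝ≥0∞)⁻¹ * r⁻¹ ≠ 0 := by
        simp [ENNReal.inv_ne_zero, hrt]
      have h2rt : (2:ℝ≥0∞)⁻¹ * r⁻¹ ≠ ∞ :=
        ENNReal.mul_ne_top (by simp) (by simp [ENNReal.inv_ne_top, hr0])
      rw [ENNReal.mul_inv (Or.inl h2r0) (Or.inl h2rt),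
        ENNReal.mul_inv (Or.inl (by simp)) (Or.inr (ENNReal.inv_ne_zero.mpr hrt)),
        inv_inv, inv_inv, mul_assoc]
  have hh : h (π m) ≤ 2 * h (π m) := by
    calc h (π m) = 1 * h (π m) := (one_mul _).symm
    _ ≤ 2 * h (π m) := mul_le_mul_left one_le_two _
  calc tstarVal h (fun _ => 0) π s
      ≤ max (max (h (π m)) 0) (s m) := iInf_le _ m
    _ = max (h (π m)) (s m) := by simp
    _ ≤ 2 * f m := by
        rw [hf]
        exact max_le (hh.trans (mul_le_mul_right (le_max_left _ _) 2))
          (key.trans (mul_le_mul_right (le_max_right _ _) 2))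
end

section
/- Variance bound for the weighted compressed estimator: under unbiased compressors C_{ij} ∈ U(ω_{ij}), unbiased σ²-variance-bounded stochastic gradients, and mutual independence, the estimator g from the previous context satisfies E[‖g - ∇f(x)‖²] ≤ W^{-2}[Σ_i Σ_j w_{ij}² b_{ij}² ω_{ij} ‖∇f(x)‖² + Σ_i (Σ_j w_{ij}² b_{ij} ω_{ij} σ² + Σ_j Σ_p min{b_{ij}, b_{ip}} w_{ij} w_{ip} σ²)], where W = Σ_i Σ_j w_{ij} b_{ij}. -/
open MeasureTheory Finset RealInnerProductSpace
set_option linter.unusedSectionVars false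

section PiMarginal

variable {ι : Type*} [Fintype ι] [DecidableEq ι] {α : ι → Type*} [∀ i, MeasurableSpace (α i)]
  (μ : ∀ i, Measure (α i)) [∀ i, IsProbabilityMeasure (μ i)]

lemma pi_map_eval (a : ι) : (Measure.pi μ).map (Function.eval a) = μ a := by
  refine Measure.ext fun s hs => ?_
  rw [Measure.map_apply (measurable_pi_apply a) hs, Set.eval_preimage, Measure.pi_pi,
    Finset.prod_eq_single a (fun i _ hia => by simp [Function.update_of_ne hia])
      (by simp), Function.update_self]

lemma pi_map_eval_pair {a c : ι} (hac : a ≠ c) :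
    (Measure.pi μ).map (fun ω => (ω a, ω c)) = (μ a).prod (μ c) := by
  refine (Measure.prod_eq (μ := μ a) (ν := μ c) fun s t hs ht => ?_).symm
  rw [Measure.map_apply ((measurable_pi_apply a).prodMk (measurable_pi_apply c)) (hs.prod ht)]
  have hpre : (fun ω : ∀ i, α i => (ω a, ω c)) ⁻¹' (s ×ˢ t) =
      Set.pi Set.univ (Function.update (Function.update (fun i => (Set.univ : Set (α i))) a s) c t) := by
    ext ω
    simp only [Set.mem_preimage, Set.mem_prod, Set.mem_pi, Set.mem_univ, true_implies]
    constructor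
    · rintro ⟨h1, h2⟩ i
      rcases eq_or_ne i c with rfl | hic
      · simpa using h2
      rcases eq_or_ne i a with rfl | hia
      · rw [Function.update_of_ne hic, Function.update_self]; exact h1
      · rw [Function.update_of_ne hic, Function.update_of_ne hia]; trivial
    · intro h
      refine ⟨?_, ?_⟩
      · have := h a; rwa [Function.update_of_ne hac, Function.update_self] at this
      · have := h c; rwa [Function.update_self] at this
  rw [hpre, Measure.pi_pi]
  rw [Finset.prod_eq_mul_of_mem a c (Finset.mem_univ a) (Finset.mem_univ c) hac
    (fun i _ hi => by simp [Function.update_of_ne hi.2, Function.update_of_ne hi.1])]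
  rw [Function.update_of_ne hac, Function.update_self, Function.update_self]

variable {E : Type*} [NormedAddCommGroup E] [InnerProductSpace ℝ E] [CompleteSpace E]
  [MeasurableSpace E] [BorelSpace E] [SecondCountableTopology E]

lemma integral_eval (a : ι) (f : α a → E) (hf : AEStronglyMeasurable f (μ a)) :
    ∫ ω, f (ω a) ∂Measure.pi μ = ∫ x, f x ∂μ a := by
  rw [← pi_map_eval μ a] at hf ⊢
  exact (integral_map (measurable_pi_apply a).aemeasurable hf).symm

lemma integral_eval_real (a : ι) (f : α a → ℝ) (hf : AEStronglyMeasurable f (μ a)) :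
    ∫ ω, f (ω a) ∂Measure.pi μ = ∫ x, f x ∂μ a := by
  rw [← pi_map_eval μ a] at hf ⊢
  exact (integral_map (measurable_pi_apply a).aemeasurable hf).symm

lemma memLp_eval (a : ι) (f : α a → E) (hf : MemLp f 2 (μ a)) :
    MemLp (fun ω => f (ω a)) 2 (Measure.pi μ) := by
  rw [← pi_map_eval μ a] at hf
  exact (memLp_map_measure_iff hf.1 (measurable_pi_apply a).aemeasurable).1 hf

lemma memLp_of_eval (a : ι) (f : α a → E) (hf : AEStronglyMeasurable f (μ a))
    (h : MemLp (fun ω => f (ω a)) 2 (Measure.pi μ)) : MemLp f 2 (μ a) := by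
  rw [← pi_map_eval μ a] at hf ⊢
  exact (memLp_map_measure_iff hf (measurable_pi_apply a).aemeasurable).2 h

lemma integral_inner_prod_eq {X Y : Type*} [MeasurableSpace X] [MeasurableSpace Y]
    (ν₁ : Measure X) (ν₂ : Measure Y) [IsProbabilityMeasure ν₁] [IsProbabilityMeasure ν₂]
    {f : X → E} {h : Y → E} (hfm : AEStronglyMeasurable f ν₁) (hhm : AEStronglyMeasurable h ν₂)
    (hf : Integrable f ν₁) (hh : Integrable h ν₂) :
    ∫ z, ⟪f z.1, h z.2⟫ ∂(ν₁.prod ν₂) = ⟪∫ x, f x ∂ν₁, ∫ y, h y ∂ν₂⟫ := by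
  have hint : Integrable (fun z : X × Y => ⟪f z.1, h z.2⟫) (ν₁.prod ν₂) := by
    refine Integrable.mono' (hf.norm.mul_prod hh.norm)
      ((hfm.comp_quasiMeasurePreserving Measure.quasiMeasurePreserving_fst).inner
        (hhm.comp_quasiMeasurePreserving Measure.quasiMeasurePreserving_snd)) ?_
    exact Filter.Eventually.of_forall fun z => norm_inner_le_norm _ _
  rw [integral_prod _ hint]
  have h1 : ∀ x, ∫ y, ⟪f x, h y⟫ ∂ν₂ = ⟪f x, ∫ y, h y ∂ν₂⟫ := fun x => integral_inner hh _
  simp_rw [h1]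
  have h2 : ∀ x, ⟪f x, ∫ y, h y ∂ν₂⟫ = ⟪∫ y, h y ∂ν₂, f x⟫ := fun x => real_inner_comm _ _
  simp_rw [h2]
  rw [integral_inner hf]
  exact real_inner_comm _ _

lemma integral_inner_eval {a c : ι} (hac : a ≠ c) (f : α a → E) (h : α c → E)
    (hfm : AEStronglyMeasurable f (μ a)) (hhm : AEStronglyMeasurable h (μ c))
    (hf : Integrable f (μ a)) (hh : Integrable h (μ c)) :
    ∫ ω, ⟪f (ω a), h (ω c)⟫ ∂Measure.pi μ = ⟪∫ x, f x ∂μ a, ∫ y, h y ∂μ c⟫ := by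
  have hmap := pi_map_eval_pair μ hac
  have hAE : AEStronglyMeasurable (fun z : α a × α c => ⟪f z.1, h z.2⟫) ((μ a).prod (μ c)) :=
    (hfm.comp_quasiMeasurePreserving Measure.quasiMeasurePreserving_fst).inner
      (hhm.comp_quasiMeasurePreserving Measure.quasiMeasurePreserving_snd)
  calc ∫ ω, ⟪f (ω a), h (ω c)⟫ ∂Measure.pi μ
      = ∫ z, ⟪f z.1, h z.2⟫ ∂((μ a).prod (μ c)) := by
        rw [← hmap]
        exact (integral_map ((measurable_pi_apply a).prodMk
          (measurable_pi_apply c)).aemeasurable (hmap ▸ hAE)).symm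
    _ = _ := integral_inner_prod_eq (μ a) (μ c) hfm hhm hf hh

end PiMarginal

section L2Lemmas

variable {X : Type*} [MeasurableSpace X] {μ : Measure X}
  {E : Type*} [NormedAddCommGroup E] [InnerProductSpace ℝ E] [CompleteSpace E]

lemma integrable_inner_of_memL2 {f h : X → E} (hf : MemLp f 2 μ) (hh : MemLp h 2 μ) :
    Integrable (fun x => ⟪f x, h x⟫) μ := by
  have hfi : Integrable (fun x => ‖f x‖ ^ 2) μ :=
    (memLp_two_iff_integrable_sq_norm hf.1).1 hf
  have hhi : Integrable (fun x => ‖h x‖ ^ 2) μ :=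
    (memLp_two_iff_integrable_sq_norm hh.1).1 hh
  refine Integrable.mono' (((hfi.add hhi).div_const 2)) (hf.1.inner hh.1) ?_
  refine Filter.Eventually.of_forall fun x => ?_
  have h1 : ‖⟪f x, h x⟫‖ ≤ ‖f x‖ * ‖h x‖ := norm_inner_le_norm _ _
  show ‖⟪f x, h x⟫‖ ≤ (‖f x‖ ^ 2 + ‖h x‖ ^ 2) / 2
  nlinarith [sq_nonneg (‖f x‖ - ‖h x‖), norm_nonneg (f x), norm_nonneg (h x)]

lemma bias_variance [IsProbabilityMeasure μ] {f : X → E} (hf : MemLp f 2 μ) (c : E) :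
    ∫ x, ‖f x - c‖ ^ 2 ∂μ =
      (∫ x, ‖f x - ∫ y, f y ∂μ‖ ^ 2 ∂μ) + ‖(∫ y, f y ∂μ) - c‖ ^ 2 := by
  set mv := ∫ y, f y ∂μ with hmv
  have hfint : Integrable f μ := hf.integrable one_le_two
  have hptw : ∀ x, ‖f x - c‖ ^ 2 =
      ‖f x - mv‖ ^ 2 + (2 * ⟪f x - mv, mv - c⟫ + ‖mv - c‖ ^ 2) := by
    intro x
    have : f x - c = (f x - mv) + (mv - c) := by abel
    rw [this, @norm_add_sq_real]; ring
  simp_rw [hptw]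
  have hfm : MemLp (fun x => f x - mv) 2 μ := hf.sub (memLp_const mv)
  have h1 : Integrable (fun x => ‖f x - mv‖ ^ 2) μ :=
    (memLp_two_iff_integrable_sq_norm hfm.1).1 hfm
  have h2a : Integrable (fun x => ⟪f x - mv, mv - c⟫) μ :=
    (hfint.sub (integrable_const mv)).inner_const _
  have h2 : Integrable (fun x => 2 * ⟪f x - mv, mv - c⟫ + ‖mv - c‖ ^ 2) μ :=
    (h2a.const_mul 2).add (integrable_const _)
  rw [integral_add h1 h2, integral_add (h2a.const_mul 2) (integrable_const _)]
  have h3 : ∫ x, ⟪f x - mv, mv - c⟫ ∂μ = 0 := by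
    have hc : ∀ x, ⟪f x - mv, mv - c⟫ = ⟪mv - c, f x - mv⟫ := fun x => real_inner_comm _ _
    simp_rw [hc]
    have h4 : ∫ x, ⟪mv - c, f x - mv⟫ ∂μ = ⟪mv - c, ∫ x, (f x - mv) ∂μ⟫ :=
      integral_inner (hfint.sub (integrable_const mv)) (mv - c)
    rw [h4, integral_sub hfint (integrable_const mv)]
    simp [hmv]
  rw [integral_const_mul, h3, integral_const]
  simp

end L2Lemmas

lemma card_filter_lt_fin {B k : ℕ} (hk : k ≤ B) :
    (Finset.univ.filter (fun l : Fin B => (l : ℕ) < k)).card = k := by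
  have : Finset.univ.filter (fun l : Fin B => (l : ℕ) < k) =
      (Finset.range k).attachFin (fun m hm => lt_of_lt_of_le (Finset.mem_range.1 hm) hk) := by
    ext l
    simp [Finset.mem_attachFin, Finset.mem_range]
  rw [this, Finset.card_attachFin, Finset.card_range]



section Aux

variable {n d B : ℕ} {m : Fin n → ℕ} (b : (i : Fin n) → Fin (m i) → ℕ)
  (Ωg : Fin n × Fin B → Type) [∀ q, MeasurableSpace (Ωg q)]
  (μg : ∀ q, Measure (Ωg q)) [∀ q, IsProbabilityMeasure (μg q)]
  (gx : EuclideanSpace ℝ (Fin d))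
  (ξ : (i : Fin n) → (l : Fin B) → Ωg (i, l) → EuclideanSpace ℝ (Fin d))

/-- index set of the minibatch -/
def shF (p : Σ i : Fin n, Fin (m i)) : Finset (Fin B) :=
  Finset.univ.filter fun l => (l : ℕ) < b p.1 p.2

/-- minibatch sum -/
noncomputable def shS (p : Σ i : Fin n, Fin (m i)) (ωg : ∀ q, Ωg q) : EuclideanSpace ℝ (Fin d) :=
  ∑ l ∈ shF b p, ξ p.1 l (ωg (p.1, l))

/-- centered single gradient -/
noncomputable def shZ (q : Fin n × Fin B) (ωg : ∀ q', Ωg q') : EuclideanSpace ℝ (Fin d) :=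
  ξ q.1 q.2 (ωg q) - gx

variable {b Ωg μg gx ξ}

lemma shZ_memLp (hξmem : ∀ i l, MemLp (ξ i l) 2 (μg (i, l))) (q : Fin n × Fin B) :
    MemLp (shZ Ωg gx ξ q) 2 (Measure.pi μg) :=
  memLp_eval μg q (fun x => ξ q.1 q.2 x - gx) ((hξmem q.1 q.2).sub (memLp_const gx))

lemma shZ_integrable (hξmem : ∀ i l, MemLp (ξ i l) 2 (μg (i, l))) (q : Fin n × Fin B) :
    Integrable (fun x : Ωg q => ξ q.1 q.2 x - gx) (μg q) :=
  ((hξmem q.1 q.2).integrable one_le_two).sub (integrable_const gx)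

lemma shZ_cov_zero (hξmeas : ∀ i l, Measurable (ξ i l))
    (hξmem : ∀ i l, MemLp (ξ i l) 2 (μg (i, l)))
    (hξunb : ∀ i l, ∫ ω, ξ i l ω ∂(μg (i, l)) = gx)
    {q q' : Fin n × Fin B} (hne : q ≠ q') :
    ∫ ωg, ⟪shZ Ωg gx ξ q ωg, shZ Ωg gx ξ q' ωg⟫ ∂(Measure.pi μg) = 0 := by
  have h := integral_inner_eval μg hne (fun x => ξ q.1 q.2 x - gx)
    (fun x => ξ q'.1 q'.2 x - gx)
    (((hξmeas q.1 q.2).sub measurable_const).aestronglyMeasurable)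
    (((hξmeas q'.1 q'.2).sub measurable_const).aestronglyMeasurable)
    (shZ_integrable hξmem q) (shZ_integrable hξmem q')
  rw [show (∫ ωg, ⟪shZ Ωg gx ξ q ωg, shZ Ωg gx ξ q' ωg⟫ ∂(Measure.pi μg)) =
    ∫ ωg, ⟪(fun x : Ωg q => ξ q.1 q.2 x - gx) (ωg q),
           (fun x : Ωg q' => ξ q'.1 q'.2 x - gx) (ωg q')⟫ ∂(Measure.pi μg) from rfl, h]
  rw [integral_sub ((hξmem q.1 q.2).integrable one_le_two) (integrable_const gx)]
  have : (∫ x, ξ q.1 q.2 x ∂(μg q)) = gx := hξunb q.1 q.2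
  rw [this, integral_const]
  simp

lemma shZ_var (hξmeas : ∀ i l, Measurable (ξ i l))
    (hξvar : ∀ i l, ∫ ω, ‖ξ i l ω - gx‖ ^ 2 ∂(μg (i, l)) ≤ σ2) (q : Fin n × Fin B) :
    ∫ ωg, ‖shZ Ωg gx ξ q ωg‖ ^ 2 ∂(Measure.pi μg) ≤ σ2 := by
  have h := integral_eval (E := ℝ) μg q (fun x => ‖ξ q.1 q.2 x - gx‖ ^ 2)
    ((((hξmeas q.1 q.2).sub measurable_const).norm.pow_const 2).aestronglyMeasurable)
  rw [show (∫ ωg, ‖shZ Ωg gx ξ q ωg‖ ^ 2 ∂(Measure.pi μg)) =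
    ∫ ωg, (fun x : Ωg q => ‖ξ q.1 q.2 x - gx‖ ^ 2) (ωg q) ∂(Measure.pi μg) from rfl, h]
  exact hξvar q.1 q.2

end Aux


section Aux2

variable {n d B : ℕ} {m : Fin n → ℕ} {b : (i : Fin n) → Fin (m i) → ℕ}
  {Ωg : Fin n × Fin B → Type} [∀ q, MeasurableSpace (Ωg q)]
  {μg : ∀ q, Measure (Ωg q)} [∀ q, IsProbabilityMeasure (μg q)]
  {gx : EuclideanSpace ℝ (Fin d)}
  {ξ : (i : Fin n) → (l : Fin B) → Ωg (i, l) → EuclideanSpace ℝ (Fin d)}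
  {σ2 : ℝ}

lemma shS_measurable (hξmeas : ∀ i l, Measurable (ξ i l)) (p : Σ i : Fin n, Fin (m i)) :
    Measurable (shS b Ωg ξ p) :=
  Finset.measurable_sum _ fun l _ => (hξmeas p.1 l).comp (measurable_pi_apply (p.1, l))

lemma shS_memLp (hξmem : ∀ i l, MemLp (ξ i l) 2 (μg (i, l))) (p : Σ i : Fin n, Fin (m i)) :
    MemLp (shS b Ωg ξ p) 2 (Measure.pi μg) :=
  memLp_finset_sum _ fun l _ =>
    memLp_eval μg (p.1, l) (ξ p.1 l) (hξmem p.1 l)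

lemma shS_integral (hξmem : ∀ i l, MemLp (ξ i l) 2 (μg (i, l)))
    (hξunb : ∀ i l, ∫ ω, ξ i l ω ∂(μg (i, l)) = gx)
    (hbB : ∀ i j, b i j ≤ B) (p : Σ i : Fin n, Fin (m i)) :
    ∫ ωg, shS b Ωg ξ p ωg ∂(Measure.pi μg) = (b p.1 p.2 : ℝ) • gx := by
  unfold shS
  rw [integral_finset_sum _ fun l _ =>
    (memLp_eval μg (p.1, l) (ξ p.1 l) (hξmem p.1 l)).integrable one_le_two]
  have : ∀ l ∈ shF b p, (∫ ωg, ξ p.1 l (ωg (p.1, l)) ∂(Measure.pi μg)) = gx := fun l _ => by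
    rw [integral_eval μg (p.1, l) (ξ p.1 l) (hξmem p.1 l).1]
    exact hξunb p.1 l
  rw [Finset.sum_congr rfl this, Finset.sum_const, shF, card_filter_lt_fin (hbB p.1 p.2)]
  simp [Nat.cast_smul_eq_nsmul ℝ]

lemma shS_sub_eq (hbB : ∀ i j, b i j ≤ B) (p : Σ i : Fin n, Fin (m i)) (ωg : ∀ q, Ωg q) :
    shS b Ωg ξ p ωg - (b p.1 p.2 : ℝ) • gx = ∑ l ∈ shF b p, shZ Ωg gx ξ (p.1, l) ωg := by
  unfold shS shZ
  rw [Finset.sum_sub_distrib, Finset.sum_const, shF, card_filter_lt_fin (hbB p.1 p.2),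
    Nat.cast_smul_eq_nsmul ℝ]

lemma shS_sub_memLp (hξmem : ∀ i l, MemLp (ξ i l) 2 (μg (i, l)))
    (p : Σ i : Fin n, Fin (m i)) :
    MemLp (fun ωg => shS b Ωg ξ p ωg - (b p.1 p.2 : ℝ) • gx) 2 (Measure.pi μg) :=
  (shS_memLp hξmem p).sub (memLp_const _)

/-- key gradient covariance bound -/
lemma shScov (hξmeas : ∀ i l, Measurable (ξ i l))
    (hξmem : ∀ i l, MemLp (ξ i l) 2 (μg (i, l)))
    (hξunb : ∀ i l, ∫ ω, ξ i l ω ∂(μg (i, l)) = gx)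
    (hξvar : ∀ i l, ∫ ω, ‖ξ i l ω - gx‖ ^ 2 ∂(μg (i, l)) ≤ σ2)
    (hσ2 : 0 ≤ σ2) (hbB : ∀ i j, b i j ≤ B) (p q : Σ i : Fin n, Fin (m i)) :
    ∫ ωg, ⟪shS b Ωg ξ p ωg - (b p.1 p.2 : ℝ) • gx,
           shS b Ωg ξ q ωg - (b q.1 q.2 : ℝ) • gx⟫ ∂(Measure.pi μg) ≤
      (if p.1 = q.1 then (min (b p.1 p.2) (b q.1 q.2) : ℝ) else 0) * σ2 := by
  obtain ⟨i, j⟩ := p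
  obtain ⟨i', j'⟩ := q
  have hrw : ∀ ωg, ⟪shS b Ωg ξ ⟨i, j⟩ ωg - (b i j : ℝ) • gx,
      shS b Ωg ξ ⟨i', j'⟩ ωg - (b i' j' : ℝ) • gx⟫ =
      ∑ l ∈ shF b ⟨i, j⟩, ∑ l' ∈ shF b ⟨i', j'⟩,
        ⟪shZ Ωg gx ξ (i, l) ωg, shZ Ωg gx ξ (i', l') ωg⟫ := by
    intro ωg
    rw [shS_sub_eq hbB ⟨i, j⟩ ωg, shS_sub_eq hbB ⟨i', j'⟩ ωg, sum_inner]
    exact Finset.sum_congr rfl fun l _ => inner_sum _ _ _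
  simp_rw [hrw]
  rw [integral_finset_sum _ fun l _ => integrable_finset_sum _ fun l' _ =>
    integrable_inner_of_memL2 (shZ_memLp hξmem (i, l)) (shZ_memLp hξmem (i', l'))]
  rw [Finset.sum_congr rfl fun l _ => integral_finset_sum _ fun l' _ =>
    integrable_inner_of_memL2 (shZ_memLp hξmem (i, l)) (shZ_memLp hξmem (i', l'))]
  by_cases hpq : i = i'
  · subst hpq
    simp only [if_true]
    have hin : ∀ l : Fin B, (∑ l' ∈ shF b ⟨i, j'⟩,
        ∫ ωg, ⟪shZ Ωg gx ξ (i, l) ωg, shZ Ωg gx ξ (i, l') ωg⟫ ∂(Measure.pi μg)) =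
        if l ∈ shF b ⟨i, j'⟩ then
          ∫ ωg, ⟪shZ Ωg gx ξ (i, l) ωg, shZ Ωg gx ξ (i, l) ωg⟫ ∂(Measure.pi μg) else 0 := by
      intro l
      rw [Finset.sum_congr rfl (fun l' _ => ?_), Finset.sum_ite_eq' (shF b ⟨i, j'⟩) l
        (fun _ => ∫ ωg, ⟪shZ Ωg gx ξ (i, l) ωg, shZ Ωg gx ξ (i, l) ωg⟫ ∂(Measure.pi μg))]
      by_cases hl : l' = l
      · subst hl; simp
      · rw [if_neg hl, shZ_cov_zero hξmeas hξmem hξunb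
          (fun hc => hl (Prod.ext_iff.1 hc.symm).2)]
    rw [Finset.sum_congr rfl fun l _ => hin l, Finset.sum_ite_mem]
    have hcard : ((shF b (⟨i, j⟩ : Σ i : Fin n, Fin (m i)) : Finset (Fin B)) ∩ shF b ⟨i, j'⟩).card
        = min (b i j) (b i j') := by
      unfold shF
      rw [← Finset.filter_and]
      simp only [← lt_min_iff]
      exact card_filter_lt_fin (le_trans (min_le_left _ _) (hbB i j))
    calc (∑ l ∈ (shF b (⟨i, j⟩ : Σ i : Fin n, Fin (m i)) : Finset (Fin B)) ∩ shF b ⟨i, j'⟩,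
            ∫ ωg, ⟪shZ Ωg gx ξ (i, l) ωg, shZ Ωg gx ξ (i, l) ωg⟫ ∂(Measure.pi μg))
        ≤ ((shF b (⟨i, j⟩ : Σ i : Fin n, Fin (m i)) : Finset (Fin B)) ∩ shF b ⟨i, j'⟩).card • σ2 := by
          refine Finset.sum_le_card_nsmul _ _ _ fun l _ => ?_
          have := shZ_var (σ2 := σ2) hξmeas hξvar (i, l)
          calc (∫ ωg, ⟪shZ Ωg gx ξ (i, l) ωg, shZ Ωg gx ξ (i, l) ωg⟫ ∂(Measure.pi μg))
              = ∫ ωg, ‖shZ Ωg gx ξ (i, l) ωg‖ ^ 2 ∂(Measure.pi μg) := by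
                congr 1; funext ωg; exact real_inner_self_eq_norm_sq _
            _ ≤ σ2 := this
      _ = (min (b i j) (b i j') : ℝ) * σ2 := by
          rw [hcard, nsmul_eq_mul, Nat.cast_min]
  · simp only [if_neg hpq]
    have hz : ∀ l ∈ shF b (⟨i, j⟩ : Σ i : Fin n, Fin (m i)), ∀ l' ∈ shF b ⟨i', j'⟩,
        (∫ ωg, ⟪shZ Ωg gx ξ (i, l) ωg, shZ Ωg gx ξ (i', l') ωg⟫ ∂(Measure.pi μg)) = 0 :=
      fun l _ l' _ => shZ_cov_zero hξmeas hξmem hξunb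
        (fun hc => hpq (Prod.ext_iff.1 hc).1)
    rw [Finset.sum_congr rfl fun l hl => Finset.sum_congr rfl (hz l hl)]
    simp

end Aux2


section Aux3

variable {n d B : ℕ} {m : Fin n → ℕ} (b : (i : Fin n) → Fin (m i) → ℕ)
  (w : (i : Fin n) → Fin (m i) → ℝ)
  (Ωg : Fin n × Fin B → Type) [∀ q, MeasurableSpace (Ωg q)]
  (μg : ∀ q, Measure (Ωg q)) [∀ q, IsProbabilityMeasure (μg q)]
  (Ωc : (Σ i : Fin n, Fin (m i)) → Type) [∀ p, MeasurableSpace (Ωc p)]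
  (μc : ∀ p, Measure (Ωc p)) [∀ p, IsProbabilityMeasure (μc p)]
  (gx : EuclideanSpace ℝ (Fin d))
  (ξ : (i : Fin n) → (l : Fin B) → Ωg (i, l) → EuclideanSpace ℝ (Fin d))
  (C : (i : Fin n) → (j : Fin (m i)) →
      EuclideanSpace ℝ (Fin d) → Ωc ⟨i, j⟩ → EuclideanSpace ℝ (Fin d))

/-- compressed minibatch term -/
noncomputable def shT (p : Σ i : Fin n, Fin (m i))
    (ω : (∀ q, Ωg q) × (∀ p', Ωc p')) : EuclideanSpace ℝ (Fin d) :=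
  C p.1 p.2 (shS b Ωg ξ p ω.1) (ω.2 p)

/-- centered weighted term -/
noncomputable def shX (p : Σ i : Fin n, Fin (m i))
    (ω : (∀ q, Ωg q) × (∀ p', Ωc p')) : EuclideanSpace ℝ (Fin d) :=
  w p.1 p.2 • (shT b Ωg Ωc ξ C p ω - (b p.1 p.2 : ℝ) • gx)

variable {b w Ωg μg Ωc μc gx ξ C} {σ2 : ℝ}

lemma shT_measurable (hξmeas : ∀ i l, Measurable (ξ i l))
    (hCmeas : ∀ i j, Measurable
      fun pr : EuclideanSpace ℝ (Fin d) × Ωc ⟨i, j⟩ => C i j pr.1 pr.2)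
    (p : Σ i : Fin n, Fin (m i)) : Measurable (shT b Ωg Ωc ξ C p) :=
  (hCmeas p.1 p.2).comp (((shS_measurable hξmeas p).comp measurable_fst).prodMk
    ((measurable_pi_apply p).comp measurable_snd))

lemma shX_memLp
    (hT : ∀ p : Σ i : Fin n, Fin (m i), MemLp (shT b Ωg Ωc ξ C p) 2
      ((Measure.pi μg).prod (Measure.pi μc)))
    (p : Σ i : Fin n, Fin (m i)) :
    MemLp (shX b w Ωg Ωc gx ξ C p) 2 ((Measure.pi μg).prod (Measure.pi μc)) :=
  ((hT p).sub (memLp_const ((b p.1 p.2 : ℝ) • gx))).const_smul (w p.1 p.2)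

lemma sh_slice_ae (hξmeas : ∀ i l, Measurable (ξ i l))
    (hCmeas : ∀ i j, Measurable
      fun pr : EuclideanSpace ℝ (Fin d) × Ωc ⟨i, j⟩ => C i j pr.1 pr.2)
    (hT : ∀ p : Σ i : Fin n, Fin (m i), MemLp (shT b Ωg Ωc ξ C p) 2
      ((Measure.pi μg).prod (Measure.pi μc)))
    (p : Σ i : Fin n, Fin (m i)) :
    ∀ᵐ ωg ∂(Measure.pi μg),
      MemLp (fun x : Ωc p => C p.1 p.2 (shS b Ωg ξ p ωg) x) 2 (μc p) := by
  have h2 : Integrable (fun ω => ‖shT b Ωg Ωc ξ C p ω‖ ^ 2)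
      ((Measure.pi μg).prod (Measure.pi μc)) :=
    (memLp_two_iff_integrable_sq_norm
      (shT_measurable hξmeas hCmeas p).aestronglyMeasurable).1 (hT p)
  filter_upwards [h2.prod_right_ae] with ωg hωg
  have hmeas : Measurable (fun x : Ωc p => C p.1 p.2 (shS b Ωg ξ p ωg) x) :=
    (hCmeas p.1 p.2).comp measurable_prodMk_left
  refine memLp_of_eval μc p _ hmeas.aestronglyMeasurable ?_
  have hsl : MemLp (fun ωc => shT b Ωg Ωc ξ C p (ωg, ωc)) 2 (Measure.pi μc) := by
    refine (memLp_two_iff_integrable_sq_norm ?_).2 hωg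
    exact ((shT_measurable hξmeas hCmeas p).comp measurable_prodMk_left).aestronglyMeasurable
  exact hsl

lemma shK_offdiag (hξmeas : ∀ i l, Measurable (ξ i l))
    (hξmem : ∀ i l, MemLp (ξ i l) 2 (μg (i, l)))
    (hξunb : ∀ i l, ∫ ω, ξ i l ω ∂(μg (i, l)) = gx)
    (hξvar : ∀ i l, ∫ ω, ‖ξ i l ω - gx‖ ^ 2 ∂(μg (i, l)) ≤ σ2)
    (hσ2 : 0 ≤ σ2) (hbB : ∀ i j, b i j ≤ B) (hw : ∀ i j, 0 ≤ w i j)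
    (hCmeas : ∀ i j, Measurable
      fun pr : EuclideanSpace ℝ (Fin d) × Ωc ⟨i, j⟩ => C i j pr.1 pr.2)
    (hCunb : ∀ i j v, ∫ ω, C i j v ω ∂(μc ⟨i, j⟩) = v)
    (hT : ∀ p : Σ i : Fin n, Fin (m i), MemLp (shT b Ωg Ωc ξ C p) 2
      ((Measure.pi μg).prod (Measure.pi μc)))
    {p q : Σ i : Fin n, Fin (m i)} (hpq : p ≠ q) :
    ∫ ω, ⟪shX b w Ωg Ωc gx ξ C p ω, shX b w Ωg Ωc gx ξ C q ω⟫
        ∂((Measure.pi μg).prod (Measure.pi μc)) ≤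
      w p.1 p.2 * w q.1 q.2 *
        ((if p.1 = q.1 then (min (b p.1 p.2) (b q.1 q.2) : ℝ) else 0) * σ2) := by
  have hXin : ∀ ω, ⟪shX b w Ωg Ωc gx ξ C p ω, shX b w Ωg Ωc gx ξ C q ω⟫ =
      w p.1 p.2 * (w q.1 q.2 *
        ⟪shT b Ωg Ωc ξ C p ω - (b p.1 p.2 : ℝ) • gx,
         shT b Ωg Ωc ξ C q ω - (b q.1 q.2 : ℝ) • gx⟫) := by
    intro ω
    rw [shX, shX, real_inner_smul_left, real_inner_smul_right]
  simp_rw [hXin]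
  rw [integral_const_mul, integral_const_mul, mul_assoc]
  have h2 : ∀ r : Σ i : Fin n, Fin (m i),
      MemLp (fun ω => shT b Ωg Ωc ξ C r ω - (b r.1 r.2 : ℝ) • gx) 2
        ((Measure.pi μg).prod (Measure.pi μc)) := fun r => (hT r).sub (memLp_const _)
  have hint := integrable_inner_of_memL2 (h2 p) (h2 q)
  rw [integral_prod _ hint]
  have hae : ∀ᵐ ωg ∂(Measure.pi μg),
      (∫ ωc, ⟪shT b Ωg Ωc ξ C p (ωg, ωc) - (b p.1 p.2 : ℝ) • gx,
             shT b Ωg Ωc ξ C q (ωg, ωc) - (b q.1 q.2 : ℝ) • gx⟫ ∂(Measure.pi μc)) =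
      ⟪shS b Ωg ξ p ωg - (b p.1 p.2 : ℝ) • gx,
       shS b Ωg ξ q ωg - (b q.1 q.2 : ℝ) • gx⟫ := by
    filter_upwards [sh_slice_ae hξmeas hCmeas hT p, sh_slice_ae hξmeas hCmeas hT q]
      with ωg h1 h2'
    have e1 := integral_inner_eval μc hpq
      (fun x => C p.1 p.2 (shS b Ωg ξ p ωg) x - (b p.1 p.2 : ℝ) • gx)
      (fun x => C q.1 q.2 (shS b Ωg ξ q ωg) x - (b q.1 q.2 : ℝ) • gx)
      (h1.1.sub aestronglyMeasurable_const) (h2'.1.sub aestronglyMeasurable_const)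
      ((h1.integrable one_le_two).sub (integrable_const _))
      ((h2'.integrable one_le_two).sub (integrable_const _))
    rw [show (∫ ωc, ⟪shT b Ωg Ωc ξ C p (ωg, ωc) - (b p.1 p.2 : ℝ) • gx,
             shT b Ωg Ωc ξ C q (ωg, ωc) - (b q.1 q.2 : ℝ) • gx⟫ ∂(Measure.pi μc)) =
      ∫ ωc, ⟪(fun x => C p.1 p.2 (shS b Ωg ξ p ωg) x - (b p.1 p.2 : ℝ) • gx) (ωc p),
             (fun x => C q.1 q.2 (shS b Ωg ξ q ωg) x - (b q.1 q.2 : ℝ) • gx) (ωc q)⟫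
        ∂(Measure.pi μc) from rfl, e1]
    rw [integral_sub (h1.integrable one_le_two) (integrable_const _),
      integral_sub (h2'.integrable one_le_two) (integrable_const _),
      hCunb p.1 p.2, hCunb q.1 q.2, integral_const, integral_const]
    simp
  rw [integral_congr_ae hae]
  exact mul_le_mul_of_nonneg_left (mul_le_mul_of_nonneg_left
    (shScov hξmeas hξmem hξunb hξvar hσ2 hbB p q) (hw q.1 q.2)) (hw p.1 p.2)

lemma shK_diag (hξmeas : ∀ i l, Measurable (ξ i l))
    (hξmem : ∀ i l, MemLp (ξ i l) 2 (μg (i, l)))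
    (hξunb : ∀ i l, ∫ ω, ξ i l ω ∂(μg (i, l)) = gx)
    (hξvar : ∀ i l, ∫ ω, ‖ξ i l ω - gx‖ ^ 2 ∂(μg (i, l)) ≤ σ2)
    (hσ2 : 0 ≤ σ2) (hbB : ∀ i j, b i j ≤ B) (hw : ∀ i j, 0 ≤ w i j)
    {ωv : (i : Fin n) → Fin (m i) → ℝ} (hωv : ∀ i j, 0 ≤ ωv i j)
    (hCmeas : ∀ i j, Measurable
      fun pr : EuclideanSpace ℝ (Fin d) × Ωc ⟨i, j⟩ => C i j pr.1 pr.2)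
    (hCunb : ∀ i j v, ∫ ω, C i j v ω ∂(μc ⟨i, j⟩) = v)
    (hCvar : ∀ i j v, ∫ ω, ‖C i j v ω - v‖ ^ 2 ∂(μc ⟨i, j⟩) ≤ ωv i j * ‖v‖ ^ 2)
    (hT : ∀ p : Σ i : Fin n, Fin (m i), MemLp (shT b Ωg Ωc ξ C p) 2
      ((Measure.pi μg).prod (Measure.pi μc)))
    (p : Σ i : Fin n, Fin (m i)) :
    ∫ ω, ⟪shX b w Ωg Ωc gx ξ C p ω, shX b w Ωg Ωc gx ξ C p ω⟫
        ∂((Measure.pi μg).prod (Measure.pi μc)) ≤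
      w p.1 p.2 ^ 2 * (b p.1 p.2 : ℝ) ^ 2 * ωv p.1 p.2 * ‖gx‖ ^ 2
      + w p.1 p.2 ^ 2 * (b p.1 p.2 : ℝ) * ωv p.1 p.2 * σ2
      + (min (b p.1 p.2) (b p.1 p.2) : ℝ) * w p.1 p.2 * w p.1 p.2 * σ2 := by
  have hXin : ∀ ω, ⟪shX b w Ωg Ωc gx ξ C p ω, shX b w Ωg Ωc gx ξ C p ω⟫ =
      w p.1 p.2 * (w p.1 p.2 *
        ‖shT b Ωg Ωc ξ C p ω - (b p.1 p.2 : ℝ) • gx‖ ^ 2) := by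
    intro ω
    rw [shX, real_inner_smul_left, real_inner_smul_right, real_inner_self_eq_norm_sq]
  simp_rw [hXin]
  rw [integral_const_mul, integral_const_mul]
  have hTm : Measurable (shT b Ωg Ωc ξ C p) := shT_measurable hξmeas hCmeas p
  have hJint : Integrable (fun ω => ‖shT b Ωg Ωc ξ C p ω - (b p.1 p.2 : ℝ) • gx‖ ^ 2)
      ((Measure.pi μg).prod (Measure.pi μc)) :=
    (memLp_two_iff_integrable_sq_norm
      (hTm.aestronglyMeasurable.sub aestronglyMeasurable_const)).1
      ((hT p).sub (memLp_const _))
  have hSm : MemLp (shS b Ωg ξ p) 2 (Measure.pi μg) := shS_memLp hξmem p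
  have hS2 : Integrable (fun ωg => ‖shS b Ωg ξ p ωg‖ ^ 2) (Measure.pi μg) :=
    (memLp_two_iff_integrable_sq_norm hSm.1).1 hSm
  have hSc2 : Integrable (fun ωg => ‖shS b Ωg ξ p ωg - (b p.1 p.2 : ℝ) • gx‖ ^ 2)
      (Measure.pi μg) :=
    (memLp_two_iff_integrable_sq_norm (hSm.1.sub aestronglyMeasurable_const)).1
      (hSm.sub (memLp_const _))
  set A := ∫ ωg, ‖shS b Ωg ξ p ωg - (b p.1 p.2 : ℝ) • gx‖ ^ 2 ∂(Measure.pi μg) with hA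
  have hA0 : 0 ≤ A := integral_nonneg fun ωg => sq_nonneg _
  have hb1 : ∫ ωg, ‖shS b Ωg ξ p ωg‖ ^ 2 ∂(Measure.pi μg)
      = A + (b p.1 p.2 : ℝ) ^ 2 * ‖gx‖ ^ 2 := by
    have h0 := bias_variance hSm (0 : EuclideanSpace ℝ (Fin d))
    simp only [sub_zero] at h0
    rw [h0, shS_integral hξmem hξunb hbB p, hA]
    congr 1
    rw [norm_smul, mul_pow]
    congr 1
    rw [Real.norm_eq_abs, abs_of_nonneg (Nat.cast_nonneg _)]
  have hb2 : A ≤ (b p.1 p.2 : ℝ) * σ2 := by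
    have h := shScov hξmeas hξmem hξunb hξvar hσ2 hbB p p
    simp only [if_pos rfl, min_self] at h
    have he : (∫ ωg, ⟪shS b Ωg ξ p ωg - (b p.1 p.2 : ℝ) • gx,
        shS b Ωg ξ p ωg - (b p.1 p.2 : ℝ) • gx⟫ ∂(Measure.pi μg)) = A := by
      rw [hA]; congr 1; funext ωg; exact real_inner_self_eq_norm_sq _
    rwa [he] at h
  have hae : ∀ᵐ ωg ∂(Measure.pi μg),
      (∫ ωc, ‖shT b Ωg Ωc ξ C p (ωg, ωc) - (b p.1 p.2 : ℝ) • gx‖ ^ 2 ∂(Measure.pi μc)) ≤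
      ωv p.1 p.2 * ‖shS b Ωg ξ p ωg‖ ^ 2
        + ‖shS b Ωg ξ p ωg - (b p.1 p.2 : ℝ) • gx‖ ^ 2 := by
    filter_upwards [sh_slice_ae hξmeas hCmeas hT p] with ωg h1
    have hmeas : AEStronglyMeasurable
        (fun x : Ωc p => ‖C p.1 p.2 (shS b Ωg ξ p ωg) x - (b p.1 p.2 : ℝ) • gx‖ ^ 2) (μc p) :=
      ((((hCmeas p.1 p.2).comp measurable_prodMk_left).sub
        measurable_const).norm.pow_const 2).aestronglyMeasurable
    have e1 : (∫ ωc, ‖shT b Ωg Ωc ξ C p (ωg, ωc) - (b p.1 p.2 : ℝ) • gx‖ ^ 2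
        ∂(Measure.pi μc)) = ∫ x, ‖C p.1 p.2 (shS b Ωg ξ p ωg) x - (b p.1 p.2 : ℝ) • gx‖ ^ 2
        ∂(μc p) := by
      exact integral_eval (E := ℝ) μc p _ hmeas
    rw [e1, bias_variance h1 ((b p.1 p.2 : ℝ) • gx), hCunb p.1 p.2]
    exact add_le_add_left (hCvar p.1 p.2 _) _
  have hJ : (∫ ω, ‖shT b Ωg Ωc ξ C p ω - (b p.1 p.2 : ℝ) • gx‖ ^ 2
      ∂((Measure.pi μg).prod (Measure.pi μc))) ≤
      ωv p.1 p.2 * (A + (b p.1 p.2 : ℝ) ^ 2 * ‖gx‖ ^ 2) + A := by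
    rw [integral_prod _ hJint]
    have hadd : Integrable (fun ωg => ωv p.1 p.2 * ‖shS b Ωg ξ p ωg‖ ^ 2
        + ‖shS b Ωg ξ p ωg - (b p.1 p.2 : ℝ) • gx‖ ^ 2) (Measure.pi μg) :=
      (hS2.const_mul (ωv p.1 p.2)).add hSc2
    refine le_trans (integral_mono_ae hJint.integral_prod_left hadd hae) ?_
    rw [integral_add (hS2.const_mul (ωv p.1 p.2)) hSc2, integral_const_mul, hb1]
  have hstep := mul_le_mul_of_nonneg_left
    (mul_le_mul_of_nonneg_left hJ (hw p.1 p.2)) (hw p.1 p.2)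
  refine le_trans hstep ?_
  rw [min_self]
  have hG : (0:ℝ) ≤ ‖gx‖ ^ 2 := sq_nonneg _
  nlinarith [sq_nonneg (w p.1 p.2), hωv p.1 p.2, hb2, hA0, hG,
    mul_nonneg (sq_nonneg (w p.1 p.2)) (hωv p.1 p.2)]


end Aux3


/-- Variance bound for the weighted compressed minibatch estimator
`g = W⁻¹ ∑_i ∑_j w_{ij} C_{ij}(∑_{l < b_{ij}} ξ_{il})`, with unbiased compressors
`C_{ij} ∈ 𝕌(ω_{ij})`, unbiased `σ²`-variance-bounded stochastic gradients `ξ_{il}`,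
ordered batch sizes `b_{i1} ≤ … ≤ b_{i,m_i}`, and all randomness mutually independent
(modelled on a product probability space):
`E‖g - ∇f(x)‖² ≤ W⁻²[∑_i ∑_j w_{ij}² b_{ij}² ω_{ij} ‖∇f(x)‖²
  + ∑_i (∑_j w_{ij}² b_{ij} ω_{ij} σ² + ∑_j ∑_p min{b_{ij}, b_{ip}} w_{ij} w_{ip} σ²)]`. -/
theorem shadowheart_estimator_variance_bound
    (n d B : ℕ) (m : Fin n → ℕ) (b : (i : Fin n) → Fin (m i) → ℕ)
    (hbB : ∀ i j, b i j ≤ B)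
    (hbmono : ∀ i, Monotone fun j : Fin (m i) => b i j)
    (w : (i : Fin n) → Fin (m i) → ℝ) (hw : ∀ i j, 0 ≤ w i j)
    (W : ℝ) (hW : W = ∑ i, ∑ j, w i j * (b i j : ℝ)) (hWpos : 0 < W)
    (ωv : (i : Fin n) → Fin (m i) → ℝ) (hωv : ∀ i j, 0 ≤ ωv i j)
    (σ2 : ℝ) (hσ2 : 0 ≤ σ2)
    (Ωg : Fin n × Fin B → Type) [∀ q, MeasurableSpace (Ωg q)]
    (μg : ∀ q, Measure (Ωg q)) [∀ q, IsProbabilityMeasure (μg q)]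
    (Ωc : (Σ i : Fin n, Fin (m i)) → Type) [∀ p, MeasurableSpace (Ωc p)]
    (μc : ∀ p, Measure (Ωc p)) [∀ p, IsProbabilityMeasure (μc p)]
    (gx : EuclideanSpace ℝ (Fin d))
    (ξ : (i : Fin n) → (l : Fin B) → Ωg (i, l) → EuclideanSpace ℝ (Fin d))
    (hξmeas : ∀ i l, Measurable (ξ i l))
    (hξmem : ∀ i l, MemLp (ξ i l) 2 (μg (i, l)))
    (hξunb : ∀ i l, ∫ ω, ξ i l ω ∂(μg (i, l)) = gx)
    (hξvar : ∀ i l, ∫ ω, ‖ξ i l ω - gx‖ ^ 2 ∂(μg (i, l)) ≤ σ2)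
    (C : (i : Fin n) → (j : Fin (m i)) →
      EuclideanSpace ℝ (Fin d) → Ωc ⟨i, j⟩ → EuclideanSpace ℝ (Fin d))
    (hCmeas : ∀ i j, Measurable
      fun p : EuclideanSpace ℝ (Fin d) × Ωc ⟨i, j⟩ => C i j p.1 p.2)
    (hCunb : ∀ i j v, ∫ ω, C i j v ω ∂(μc ⟨i, j⟩) = v)
    (hCvar : ∀ i j v, ∫ ω, ‖C i j v ω - v‖ ^ 2 ∂(μc ⟨i, j⟩) ≤ ωv i j * ‖v‖ ^ 2)
    (g : ((∀ q, Ωg q) × (∀ p, Ωc p)) → EuclideanSpace ℝ (Fin d))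
    (hg : g = fun ω => W⁻¹ •
      ∑ i, ∑ j, w i j • C i j
        (∑ l ∈ Finset.univ.filter (fun l : Fin B => (l : ℕ) < b i j), ξ i l (ω.1 (i, l)))
        (ω.2 ⟨i, j⟩))
    (hterm : ∀ i j, MemLp
      (fun ω : (∀ q, Ωg q) × (∀ p, Ωc p) => C i j
        (∑ l ∈ Finset.univ.filter (fun l : Fin B => (l : ℕ) < b i j), ξ i l (ω.1 (i, l)))
        (ω.2 ⟨i, j⟩))
      2 ((Measure.pi μg).prod (Measure.pi μc))) :
    ∫ ω, ‖g ω - gx‖ ^ 2 ∂((Measure.pi μg).prod (Measure.pi μc)) ≤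
      (W ^ 2)⁻¹ *
        ((∑ i, ∑ j, (w i j) ^ 2 * (b i j : ℝ) ^ 2 * ωv i j * ‖gx‖ ^ 2) +
          ∑ i, ((∑ j, (w i j) ^ 2 * (b i j : ℝ) * ωv i j * σ2) +
            ∑ j, ∑ p, (min (b i j) (b i p) : ℝ) * w i j * w i p * σ2)) := by
  classical
  have hT : ∀ p : Σ i : Fin n, Fin (m i), MemLp (shT b Ωg Ωc ξ C p) 2
      ((Measure.pi μg).prod (Measure.pi μc)) := fun p => hterm p.1 p.2
  -- pointwise identity
  have hgx : ∀ ω, g ω - gx = W⁻¹ • ∑ p : Σ i : Fin n, Fin (m i), shX b w Ωg Ωc gx ξ C p ω := by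
    intro ω
    rw [hg]
    have h1 : (∑ i, ∑ j, w i j • C i j
        (∑ l ∈ Finset.univ.filter (fun l : Fin B => (l : ℕ) < b i j), ξ i l (ω.1 (i, l)))
        (ω.2 ⟨i, j⟩)) = ∑ p : Σ i : Fin n, Fin (m i),
          w p.1 p.2 • shT b Ωg Ωc ξ C p ω := by
      rw [← Finset.univ_sigma_univ, Finset.sum_sigma]
      rfl
    have h2 : gx = W⁻¹ • (W • gx) := by
      rw [smul_smul, inv_mul_cancel₀ hWpos.ne', one_smul]
    calc W⁻¹ • (∑ i, ∑ j, w i j • C i j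
        (∑ l ∈ Finset.univ.filter (fun l : Fin B => (l : ℕ) < b i j), ξ i l (ω.1 (i, l)))
        (ω.2 ⟨i, j⟩)) - gx
        = W⁻¹ • ((∑ p : Σ i : Fin n, Fin (m i), w p.1 p.2 • shT b Ωg Ωc ξ C p ω)
            - W • gx) := by
          rw [h1]
          nth_rewrite 1 [h2]
          rw [smul_sub]
      _ = W⁻¹ • ∑ p : Σ i : Fin n, Fin (m i), shX b w Ωg Ωc gx ξ C p ω := by
          congr 1
          have hWs : W • gx = ∑ p : Σ i : Fin n, Fin (m i),
              (w p.1 p.2 * (b p.1 p.2 : ℝ)) • gx := by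
            rw [← Finset.sum_smul]
            congr 1
            rw [hW, ← Finset.univ_sigma_univ, Finset.sum_sigma]
          rw [hWs, ← Finset.sum_sub_distrib]
          refine Finset.sum_congr rfl fun p _ => ?_
          rw [shX, smul_sub, smul_smul]
    done
  have hptnorm : ∀ ω, ‖g ω - gx‖ ^ 2 =
      (W ^ 2)⁻¹ * ‖∑ p : Σ i : Fin n, Fin (m i), shX b w Ωg Ωc gx ξ C p ω‖ ^ 2 := by
    intro ω
    rw [hgx ω, norm_smul, mul_pow, Real.norm_eq_abs, abs_of_pos (inv_pos.2 hWpos), inv_pow]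
  simp_rw [hptnorm]
  rw [integral_const_mul]
  refine mul_le_mul_of_nonneg_left ?_ (inv_nonneg.2 (sq_nonneg W))
  -- expand the square
  have hXL2 : ∀ p : Σ i : Fin n, Fin (m i), MemLp (shX b w Ωg Ωc gx ξ C p) 2
      ((Measure.pi μg).prod (Measure.pi μc)) := shX_memLp hT
  have hptw : ∀ ω, ‖∑ p : Σ i : Fin n, Fin (m i), shX b w Ωg Ωc gx ξ C p ω‖ ^ 2 =
      ∑ p : Σ i : Fin n, Fin (m i), ∑ q : Σ i : Fin n, Fin (m i),
        ⟪shX b w Ωg Ωc gx ξ C p ω, shX b w Ωg Ωc gx ξ C q ω⟫ := by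
    intro ω
    rw [← real_inner_self_eq_norm_sq, sum_inner]
    exact Finset.sum_congr rfl fun p _ => inner_sum _ _ _
  simp_rw [hptw]
  rw [integral_finset_sum _ fun p _ => integrable_finset_sum _ fun q _ =>
    integrable_inner_of_memL2 (hXL2 p) (hXL2 q)]
  rw [Finset.sum_congr rfl fun p _ => integral_finset_sum _ fun q _ =>
    integrable_inner_of_memL2 (hXL2 p) (hXL2 q)]
  -- term bounds
  set M : (Σ i : Fin n, Fin (m i)) → (Σ i : Fin n, Fin (m i)) → ℝ := fun p q =>
    w p.1 p.2 * w q.1 q.2 *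
      ((if p.1 = q.1 then (min (b p.1 p.2) (b q.1 q.2) : ℝ) else 0) * σ2) with hM
  set D : (Σ i : Fin n, Fin (m i)) → ℝ := fun p =>
    w p.1 p.2 ^ 2 * (b p.1 p.2 : ℝ) ^ 2 * ωv p.1 p.2 * ‖gx‖ ^ 2
      + w p.1 p.2 ^ 2 * (b p.1 p.2 : ℝ) * ωv p.1 p.2 * σ2 with hD
  have hKb : ∀ p q : Σ i : Fin n, Fin (m i),
      (∫ ω, ⟪shX b w Ωg Ωc gx ξ C p ω, shX b w Ωg Ωc gx ξ C q ω⟫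
        ∂((Measure.pi μg).prod (Measure.pi μc))) ≤
      M p q + (if p = q then D p else 0) := by
    intro p q
    by_cases h : p = q
    · subst h
      rw [if_pos rfl]
      refine le_trans (shK_diag hξmeas hξmem hξunb hξvar hσ2 hbB hw hωv
        hCmeas hCunb hCvar hT p) (le_of_eq ?_)
      rw [hM, hD]
      simp only [eq_self_iff_true, if_true, min_self]
      ring
    · rw [if_neg h, add_zero, hM]
      exact shK_offdiag hξmeas hξmem hξunb hξvar hσ2 hbB hw hCmeas hCunb hT h
  refine le_trans (Finset.sum_le_sum fun p _ => Finset.sum_le_sum fun q _ => hKb p q) ?_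
  -- compute the bound sum
  have hsplit : (∑ p : Σ i : Fin n, Fin (m i), ∑ q : Σ i : Fin n, Fin (m i),
      (M p q + (if p = q then D p else 0))) =
      (∑ p : Σ i : Fin n, Fin (m i), ∑ q : Σ i : Fin n, Fin (m i), M p q)
        + ∑ p : Σ i : Fin n, Fin (m i), D p := by
    rw [← Finset.sum_add_distrib]
    refine Finset.sum_congr rfl fun p _ => ?_
    rw [Finset.sum_add_distrib]
    congr 1
    rw [Finset.sum_ite_eq Finset.univ p (fun _ => D p), if_pos (Finset.mem_univ p)]
  rw [hsplit]
  -- identify with the RHS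
  have hDsum : (∑ p : Σ i : Fin n, Fin (m i), D p) =
      (∑ i, ∑ j, (w i j) ^ 2 * (b i j : ℝ) ^ 2 * ωv i j * ‖gx‖ ^ 2)
        + ∑ i, ∑ j, (w i j) ^ 2 * (b i j : ℝ) * ωv i j * σ2 := by
    rw [← Finset.univ_sigma_univ, Finset.sum_sigma, ← Finset.sum_add_distrib]
    refine Finset.sum_congr rfl fun i _ => ?_
    rw [← Finset.sum_add_distrib]
  have hMsum : (∑ p : Σ i : Fin n, Fin (m i), ∑ q : Σ i : Fin n, Fin (m i), M p q) =
      ∑ i, ∑ j, ∑ p, (min (b i j) (b i p) : ℝ) * w i j * w i p * σ2 := by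
    rw [← Finset.univ_sigma_univ, Finset.sum_sigma]
    refine Finset.sum_congr rfl fun i _ => ?_
    refine Finset.sum_congr rfl fun j _ => ?_
    rw [Finset.sum_sigma]
    have hm : ∀ i' : Fin n, (∑ j' : Fin (m i'), M ⟨i, j⟩ ⟨i', j'⟩) =
        if i = i' then ∑ j' : Fin (m i'), w i j * w i' j' *
          ((min (b i j) (b i' j') : ℝ) * σ2) else 0 := by
      intro i'
      by_cases hii : i = i'
      · rw [if_pos hii]
        refine Finset.sum_congr rfl fun j' _ => ?_
        rw [hM]
        simp only [if_pos hii]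
      · rw [if_neg hii]
        refine Finset.sum_eq_zero fun j' _ => ?_
        rw [hM]
        simp only [if_neg hii]
        ring
    rw [Finset.sum_congr rfl fun i' _ => hm i',
      Finset.sum_ite_eq Finset.univ i _, if_pos (Finset.mem_univ i)]
    refine Finset.sum_congr rfl fun j' _ => ?_
    ring
  rw [hMsum, hDsum, Finset.sum_add_distrib]
  refine le_of_eq (by ring)
end

section
/- If for each worker m ∈ [n], η_m and μ_m are independent random variables such that P(h_m η_m ≤ t) ≤ 1 - (1-p_σ)^{⌊t/h_m⌋} and P(τ_m μ_m ≤ t) ≤ 1 - (1-p_ω)^{⌊t/τ_m⌋}, and all 2n variables are mutually independent, then P(min_m {h_m η_m + τ_m μ_m} ≤ t) ≤ 1 - Π_{m=1}^n (1 - (1-(1-p_ω)^{⌊t/τ_m⌋})(1-(1-p_σ)^{⌊t/h_m⌋})). -/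
open MeasureTheory ProbabilityTheory
open scoped ENNReal

/-- If for each worker `m` the (extended-natural-valued) random variables `η m` and `μv m`
satisfy `P(h_m η_m ≤ t) ≤ 1 - (1-p_σ)^⌊t/h_m⌋` and `P(τ_m μ_m ≤ t) ≤ 1 - (1-p_ω)^⌊t/τ_m⌋`,
and all `2n` variables are mutually independent, then
`P(min_m {h_m η_m + τ_m μ_m} ≤ t)
  ≤ 1 - ∏_m (1 - (1-(1-p_ω)^⌊t/τ_m⌋)(1-(1-p_σ)^⌊t/h_m⌋))`. -/
theorem min_worker_time_probability_bound
    {Ω : Type*} [MeasurableSpace Ω] (μ : Measure Ω) [IsProbabilityMeasure μ]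
    (n : ℕ) (hn : 0 < n) (h τ : Fin n → ℝ)
    (hh : ∀ m, 0 < h m) (hτ : ∀ m, 0 < τ m)
    (pσ pω : ℝ) (hpσ : pσ ∈ Set.Ioc (0 : ℝ) 1) (hpω : pω ∈ Set.Ioc (0 : ℝ) 1)
    (t : ℝ) (ht : 0 ≤ t)
    (η μv : Fin n → Ω → ℝ≥0∞)
    (hηmeas : ∀ m, Measurable (η m)) (hμvmeas : ∀ m, Measurable (μv m))
    (hindep : iIndepFun (β := fun _ : Fin n ⊕ Fin n => ℝ≥0∞)
      (Sum.elim η μv) μ)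
    (hηtail : ∀ m, μ {ω | ENNReal.ofReal (h m) * η m ω ≤ ENNReal.ofReal t} ≤
      ENNReal.ofReal (1 - (1 - pσ) ^ Nat.floor (t / h m)))
    (hμtail : ∀ m, μ {ω | ENNReal.ofReal (τ m) * μv m ω ≤ ENNReal.ofReal t} ≤
      ENNReal.ofReal (1 - (1 - pω) ^ Nat.floor (t / τ m))) :
    μ {ω | (⨅ m, (ENNReal.ofReal (h m) * η m ω + ENNReal.ofReal (τ m) * μv m ω)) ≤
        ENNReal.ofReal t} ≤
      ENNReal.ofReal (1 - ∏ m, (1 - (1 - (1 - pω) ^ Nat.floor (t / τ m)) *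
        (1 - (1 - pσ) ^ Nat.floor (t / h m)))) := by
  have hne : Nonempty (Fin n) := ⟨⟨0, hn⟩⟩
  set f : Fin n ⊕ Fin n → Ω → ℝ≥0∞ := Sum.elim η μv with hf_def
  have hf : ∀ i, Measurable (f i) := by rintro (m | m); exacts [hηmeas m, hμvmeas m]
  set S : Fin n → Set Ω :=
    fun m => {ω | ENNReal.ofReal (h m) * η m ω ≤ ENNReal.ofReal t} with hS_def
  set T : Fin n → Set Ω :=
    fun m => {ω | ENNReal.ofReal (τ m) * μv m ω ≤ ENNReal.ofReal t} with hT_def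
  have hmle : MeasurableSet {x : ℝ≥0∞ | ENNReal.ofReal 1 * x ≤ ENNReal.ofReal t} := by
    exact measurableSet_le (measurable_id.const_mul _) measurable_const
  have hSmeas : ∀ m, MeasurableSet (S m) := fun m =>
    (hηmeas m) (measurableSet_le (measurable_id.const_mul _) measurable_const)
  have hTmeas : ∀ m, MeasurableSet (T m) := fun m =>
    (hμvmeas m) (measurableSet_le (measurable_id.const_mul _) measurable_const)
  -- real quantities
  set rS : Fin n → ℝ := fun m => 1 - (1 - pσ) ^ Nat.floor (t / h m) with hrS_def
  set rT : Fin n → ℝ := fun m => 1 - (1 - pω) ^ Nat.floor (t / τ m) with hrT_def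
  have hrS0 : ∀ m, 0 ≤ rS m := by
    intro m
    have : (1 - pσ) ^ Nat.floor (t / h m) ≤ 1 :=
      pow_le_one₀ (by linarith [hpσ.2]) (by linarith [hpσ.1])
    simp only [hrS_def]; linarith
  have hrS1 : ∀ m, rS m ≤ 1 := by
    intro m
    have : 0 ≤ (1 - pσ) ^ Nat.floor (t / h m) := pow_nonneg (by linarith [hpσ.2]) _
    simp only [hrS_def]; linarith
  have hrT0 : ∀ m, 0 ≤ rT m := by
    intro m
    have : (1 - pω) ^ Nat.floor (t / τ m) ≤ 1 :=
      pow_le_one₀ (by linarith [hpω.2]) (by linarith [hpω.1])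
    simp only [hrT_def]; linarith
  have hrT1 : ∀ m, rT m ≤ 1 := by
    intro m
    have : 0 ≤ (1 - pω) ^ Nat.floor (t / τ m) := pow_nonneg (by linarith [hpω.2]) _
    simp only [hrT_def]; linarith
  -- step 1 : the event is contained in the union
  have hsub : {ω | (⨅ m, (ENNReal.ofReal (h m) * η m ω + ENNReal.ofReal (τ m) * μv m ω)) ≤
      ENNReal.ofReal t} ⊆ ⋃ m, (S m ∩ T m) := by
    intro ω hω
    obtain ⟨m0, hm0⟩ := Finite.exists_min
      (fun m => ENNReal.ofReal (h m) * η m ω + ENNReal.ofReal (τ m) * μv m ω)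
    have hle : ENNReal.ofReal (h m0) * η m0 ω + ENNReal.ofReal (τ m0) * μv m0 ω ≤
        ENNReal.ofReal t := le_trans (le_iInf hm0) hω
    refine Set.mem_iUnion.2 ⟨m0, ⟨?_, ?_⟩⟩
    · exact le_trans le_self_add hle
    · exact le_trans le_add_self hle
  have hUmeas : MeasurableSet (⋃ m, S m ∩ T m) :=
    MeasurableSet.iUnion fun m => (hSmeas m).inter (hTmeas m)
  -- step 2: two-variable independence
  have hg : ∀ m, μ (S m ∩ T m) = μ (S m) * μ (T m) := by
    intro m
    have h2 : IndepFun (η m) (μv m) μ := by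
      have := hindep.indepFun (i := Sum.inl m) (j := Sum.inr m) (by simp)
      simpa [hf_def] using this
    exact h2.measure_inter_preimage_eq_mul
      {x : ℝ≥0∞ | ENNReal.ofReal (h m) * x ≤ ENNReal.ofReal t}
      {x : ℝ≥0∞ | ENNReal.ofReal (τ m) * x ≤ ENNReal.ofReal t}
      (measurableSet_le (measurable_id.const_mul _) measurable_const)
      (measurableSet_le (measurable_id.const_mul _) measurable_const)
  -- step 3: the product formula for the intersection of complements
  have key : ∀ s : Finset (Fin n),
      μ (⋂ m ∈ s, (S m ∩ T m)ᶜ) = ∏ m ∈ s, (1 - μ (S m ∩ T m)) := by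
    intro s
    induction s using Finset.induction_on with
    | empty => simp
    | @insert a s ha ih =>
      rw [Finset.set_biInter_insert, Finset.prod_insert ha]
      set C : Set Ω := ⋂ m ∈ s, (S m ∩ T m)ᶜ with hC_def
      have hCmeas : MeasurableSet C :=
        MeasurableSet.biInter (Set.to_countable _)
          fun m _ => ((hSmeas m).inter (hTmeas m)).compl
      -- the core independence step
      have hind : μ ((S a ∩ T a) ∩ C) = μ (S a ∩ T a) * μ C := by
        classical
        set Sfin : Finset (Fin n ⊕ Fin n) := {Sum.inl a, Sum.inr a} with hSfin
        set Tfin : Finset (Fin n ⊕ Fin n) := s.image Sum.inl ∪ s.image Sum.inr with hTfin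
        have hdisj : Disjoint Sfin Tfin := by
          rw [Finset.disjoint_left]
          intro x hxS hxT
          simp only [hSfin, hTfin, Finset.mem_insert, Finset.mem_singleton,
            Finset.mem_union, Finset.mem_image] at hxS hxT
          rcases hxS with rfl | rfl <;>
            rcases hxT with ⟨m, hm, hstar⟩ | ⟨m, hm, hstar⟩ <;>
              first
                | exact Sum.inl_ne_inr hstar.symm |> absurd rfl
                | (cases hstar; exact ha hm)
                | exact absurd hstar (by simp)
        have hIF := hindep.indepFun_finset Sfin Tfin hdisj hf
        have hmemS1 : (Sum.inl a : Fin n ⊕ Fin n) ∈ Sfin := by simp [hSfin]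
        have hmemS2 : (Sum.inr a : Fin n ⊕ Fin n) ∈ Sfin := by simp [hSfin]
        have hmemT1 : ∀ m ∈ s, (Sum.inl m : Fin n ⊕ Fin n) ∈ Tfin := fun m hm =>
          Finset.mem_union_left _ (Finset.mem_image_of_mem _ hm)
        have hmemT2 : ∀ m ∈ s, (Sum.inr m : Fin n ⊕ Fin n) ∈ Tfin := fun m hm =>
          Finset.mem_union_right _ (Finset.mem_image_of_mem _ hm)
        set DS : Set ((i : Sfin) → ℝ≥0∞) :=
          {g | ENNReal.ofReal (h a) * g ⟨Sum.inl a, hmemS1⟩ ≤ ENNReal.ofReal t} ∩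
          {g | ENNReal.ofReal (τ a) * g ⟨Sum.inr a, hmemS2⟩ ≤ ENNReal.ofReal t} with hDS
        set CS : Set ((i : Tfin) → ℝ≥0∞) :=
          ⋂ (m : Fin n), ⋂ (hm : m ∈ s),
            ({g : (i : Tfin) → ℝ≥0∞ |
                ENNReal.ofReal (h m) * g ⟨Sum.inl m, hmemT1 m hm⟩ ≤ ENNReal.ofReal t} ∩
             {g : (i : Tfin) → ℝ≥0∞ |
                ENNReal.ofReal (τ m) * g ⟨Sum.inr m, hmemT2 m hm⟩ ≤ ENNReal.ofReal t})ᶜ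
          with hCS
        have hDSmeas : MeasurableSet DS :=
          (measurableSet_le ((measurable_pi_apply _).const_mul _) measurable_const).inter
            (measurableSet_le ((measurable_pi_apply _).const_mul _) measurable_const)
        have hCSmeas : MeasurableSet CS :=
          MeasurableSet.iInter fun m => MeasurableSet.iInter fun hm =>
            ((measurableSet_le ((measurable_pi_apply _).const_mul _) measurable_const).inter
              (measurableSet_le ((measurable_pi_apply _).const_mul _)
                measurable_const)).compl
        have hDpre : S a ∩ T a = (fun ω (i : Sfin) => f i ω) ⁻¹' DS := by
          ext ω
          simp [hDS, hS_def, hT_def, hf_def, Set.mem_preimage]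
        have hCpre : C = (fun ω (i : Tfin) => f i ω) ⁻¹' CS := by
          ext ω
          simp [hC_def, hCS, hS_def, hT_def, hf_def, Set.mem_preimage, Set.mem_iInter]
        rw [hDpre, hCpre]
        exact hIF.measure_inter_preimage_eq_mul DS CS hDSmeas hCSmeas
      -- conclude the insert step
      have hDmeas : MeasurableSet (S a ∩ T a) := (hSmeas a).inter (hTmeas a)
      have h1 : (S a ∩ T a)ᶜ ∩ C = C \ (S a ∩ T a) := by
        rw [Set.diff_eq, Set.inter_comm]
      have h2 : μ (C ∩ (S a ∩ T a)) + μ (C \ (S a ∩ T a)) = μ C :=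
        measure_inter_add_diff C hDmeas
      have h3 : μ (C \ (S a ∩ T a)) = μ C - μ (C ∩ (S a ∩ T a)) := by
        rw [eq_comm, ENNReal.sub_eq_of_eq_add_rev (measure_ne_top μ _) h2.symm] <;> rfl
      rw [h1, h3, Set.inter_comm C, hind, ← ih,
        ENNReal.sub_mul (fun _ _ => measure_ne_top μ C), one_mul]
  -- step 4: assemble
  have hcompl : (⋃ m, S m ∩ T m)ᶜ = ⋂ m ∈ (Finset.univ : Finset (Fin n)), (S m ∩ T m)ᶜ := by
    simp [Set.compl_iUnion]
  have hUeq : μ (⋃ m, S m ∩ T m) = 1 - ∏ m, (1 - μ (S m ∩ T m)) := by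
    rw [← key Finset.univ, ← hcompl, ← prob_compl_eq_one_sub hUmeas.compl, compl_compl]
  have hfac : ∀ m, ENNReal.ofReal (1 - rT m * rS m) ≤ 1 - μ (S m ∩ T m) := by
    intro m
    have hb : μ (S m ∩ T m) ≤ ENNReal.ofReal (rT m) * ENNReal.ofReal (rS m) := by
      rw [hg m, mul_comm]
      exact mul_le_mul' (hμtail m) (hηtail m)
    have : ENNReal.ofReal (1 - rT m * rS m) =
        1 - ENNReal.ofReal (rT m) * ENNReal.ofReal (rS m) := by
      rw [← ENNReal.ofReal_mul (hrT0 m), ← ENNReal.ofReal_one,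
        ENNReal.ofReal_sub _ (mul_nonneg (hrT0 m) (hrS0 m)), ENNReal.ofReal_one]
    rw [this]
    exact tsub_le_tsub_left hb 1
  have hprod0 : ∀ m, (0:ℝ) ≤ 1 - rT m * rS m := by
    intro m
    have := mul_le_one₀ (hrT1 m) (hrS0 m) (hrS1 m)
    linarith
  have hprodle : ENNReal.ofReal (∏ m, (1 - rT m * rS m)) ≤ ∏ m, (1 - μ (S m ∩ T m)) := by
    rw [ENNReal.ofReal_prod_of_nonneg (fun m _ => hprod0 m)]
    exact Finset.prod_le_prod' fun m _ => hfac m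
  have hprod1 : ∏ m, (1 - rT m * rS m) ≤ 1 := by
    apply Finset.prod_le_one (fun m _ => hprod0 m)
    intro m _
    have := mul_nonneg (hrT0 m) (hrS0 m)
    linarith
  calc μ {ω | (⨅ m, (ENNReal.ofReal (h m) * η m ω + ENNReal.ofReal (τ m) * μv m ω)) ≤
        ENNReal.ofReal t}
      ≤ μ (⋃ m, S m ∩ T m) := measure_mono hsub
    _ = 1 - ∏ m, (1 - μ (S m ∩ T m)) := hUeq
    _ ≤ 1 - ENNReal.ofReal (∏ m, (1 - rT m * rS m)) := tsub_le_tsub_left hprodle 1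
    _ = ENNReal.ofReal (1 - ∏ m, (1 - rT m * rS m)) := by
        rw [← ENNReal.ofReal_one, ← ENNReal.ofReal_sub _
          (Finset.prod_nonneg fun m _ => hprod0 m)]
    _ = _ := by simp [hrS_def, hrT_def]
end
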